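/- arXiv:1006.5223 — 3 statements merged into one kernel-verified Lean document; each statement's English description precedes it below -/
import Mathlib

section
/- (Nielsen) Let F₂ be the free group on two generators a, b, and let φ be an automorphism of F₂. Then φ([a,b]) is conjugate in F₂ either to [a,b] or to its inverse [b,a]; that is, there exists w ∈ F₂ with φ(a·b·a⁻¹·b⁻¹) = w·(a·b·a⁻¹·b⁻¹)·w⁻¹ or φ(a·b·a⁻¹·b⁻¹) = w·(b·a·b⁻¹·a⁻¹)·w⁻¹. -/
set_option linter.unusedSectionVars false

namespace NielsenAux

open FreeGroup List

variable {α : Type*} [DecidableEq α]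

/-- Reducedness of a word, as a chain condition. -/
def IsRed (L : List (α × Bool)) : Prop :=
  List.Chain' (fun a b : α × Bool => ¬(a.1 = b.1 ∧ a.2 = !b.2)) L

theorem red_eq_of_length {L₁ L₂ : List (α × Bool)} (h : Red L₁ L₂)
    (hl : L₁.length ≤ L₂.length) : L₁ = L₂ := by
  rcases Relation.ReflTransGen.cases_head h with rfl | ⟨L₃, h₁, h₂⟩
  · rfl
  · have := h₁.length
    have := FreeGroup.Red.length_le h₂
    omega

theorem reduce_cons' {L tl : List (α × Bool)} (x hd : α × Bool) (h : reduce L = hd :: tl) :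
    reduce (x :: L) = if x.1 = hd.1 ∧ x.2 = !hd.2 then tl else x :: hd :: tl := by
  rw [reduce.cons (L := L) x, h]

theorem reduce_eq_self_iff (L : List (α × Bool)) : reduce L = L ↔ IsRed L := by
  constructor
  · intro h
    induction L with
    | nil => exact List.isChain_nil
    | cons x L ih =>
      rcases hL : reduce L with _ | ⟨hd, tl⟩
      · have : L = [] := by
          have h2 := reduce.cons (L := L) x
          rw [hL] at h2
          rw [h2] at h
          simpa using h.symm
        subst this
        exact List.isChain_singleton x
      · have h2 := reduce_cons' x hd hL
        by_cases hc : x.1 = hd.1 ∧ x.2 = !hd.2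
        · exfalso
          rw [if_pos hc] at h2
          rw [h2] at h
          have hred : Red L (reduce L) := reduce.red
          have := FreeGroup.Red.length_le hred
          rw [hL, h] at this
          simp at this
        · rw [if_neg hc] at h2
          rw [h2] at h
          have hx : L = hd :: tl := by
            simp only [List.cons.injEq] at h
            exact h.2.symm
          have hLred : reduce L = L := by rw [hL, hx]
          have := ih hLred
          rw [hx]
          exact List.isChain_cons_cons.2 ⟨hc, hx ▸ this⟩
  · intro h
    induction L with
    | nil => rfl
    | cons x L ih =>
      have hL : reduce L = L := ih h.tail
      cases L with
      | nil => rfl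
      | cons hd tl =>
        have h2 := reduce_cons' x hd hL
        have hc : ¬(x.1 = hd.1 ∧ x.2 = !hd.2) := (List.isChain_cons_cons.1 h).1
        rw [if_neg hc] at h2
        exact h2

theorem isRed_toWord (x : FreeGroup α) : IsRed x.toWord :=
  (reduce_eq_self_iff _).1 (reduce_toWord x)

theorem IsRed.infix {L₁ L : List (α × Bool)} (h : IsRed L) (h' : L₁ <:+: L) : IsRed L₁ :=
  List.IsChain.infix h h'

theorem toWord_mk_isRed {L : List (α × Bool)} (h : IsRed L) : (mk L).toWord = L := by
  rw [toWord_mk, (reduce_eq_self_iff L).2 h]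

theorem norm_mk_isRed {L : List (α × Bool)} (h : IsRed L) :
    FreeGroup.norm (mk L) = L.length := by
  unfold FreeGroup.norm
  rw [toWord_mk_isRed h]

theorem toWord_mul (x y : FreeGroup α) :
    (x * y).toWord = reduce (x.toWord ++ y.toWord) := by
  conv_lhs => rw [← mk_toWord (x := x), ← mk_toWord (x := y), mul_mk, toWord_mk]

/-- `NC a b`: the product `a * b` has no cancellation. -/
def NC (a b : FreeGroup α) : Prop :=
  FreeGroup.norm (a * b) = FreeGroup.norm a + FreeGroup.norm b

theorem NC.one_left (b : FreeGroup α) : NC 1 b := by simp [NC]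

theorem NC.one_right (a : FreeGroup α) : NC a 1 := by simp [NC]

theorem nc_iff {a b : FreeGroup α} : NC a b ↔ IsRed (a.toWord ++ b.toWord) := by
  constructor
  · intro h
    have h1 : (a * b).toWord = reduce (a.toWord ++ b.toWord) := toWord_mul a b
    have h3 : (a.toWord ++ b.toWord).length ≤ (reduce (a.toWord ++ b.toWord)).length := by
      have hh : (a * b).toWord.length = a.toWord.length + b.toWord.length := h
      rw [h1] at hh
      simp [hh]
    have h4 := red_eq_of_length (reduce.red (L := a.toWord ++ b.toWord)) h3
    exact (reduce_eq_self_iff _).1 h4.symm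
  · intro h
    have h1 : (a * b).toWord = a.toWord ++ b.toWord := by
      rw [toWord_mul, (reduce_eq_self_iff _).2 h]
    unfold NC FreeGroup.norm
    rw [h1, List.length_append]

theorem NC.toWord_mul_eq {a b : FreeGroup α} (h : NC a b) :
    (a * b).toWord = a.toWord ++ b.toWord := by
  rw [toWord_mul, (reduce_eq_self_iff _).2 (nc_iff.1 h)]

theorem NC.inv {a b : FreeGroup α} (h : NC a b) : NC b⁻¹ a⁻¹ := by
  unfold NC at h ⊢
  rw [← mul_inv_rev, norm_inv_eq, norm_inv_eq, norm_inv_eq, h]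
  omega


local notation "‖" x "‖" => FreeGroup.norm x

theorem invRev_append' (L₁ L₂ : List (α × Bool)) :
    invRev (L₁ ++ L₂) = invRev L₂ ++ invRev L₁ := by
  simp [invRev]

theorem isRed_glue {P Q R : List (α × Bool)} (h1 : IsRed (P ++ Q)) (h2 : IsRed (Q ++ R))
    (hQ : Q ≠ []) : IsRed (P ++ (Q ++ R)) := by
  rw [IsRed, List.Chain', List.isChain_append]
  refine ⟨(List.isChain_append.1 h1).1, h2, ?_⟩
  intro p hp q hq
  rw [List.head?_append_of_ne_nil Q hQ] at hq
  exact (List.isChain_append.1 h1).2.2 p hp q hq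

theorem cancel_words (A : List (α × Bool)) : ∀ (B : List (α × Bool)), IsRed A → IsRed B →
    ∃ A' S B', A = A' ++ S ∧ B = invRev S ++ B' ∧ IsRed (A' ++ B') ∧
      reduce (A ++ B) = A' ++ B' := by
  induction A using List.reverseRecOn with
  | nil =>
    intro B _ hB
    exact ⟨[], [], B, rfl, by simp [invRev], hB, (reduce_eq_self_iff B).2 hB⟩
  | append_singleton A₀ p ih =>
    intro B hA hB
    cases B with
    | nil =>
      refine ⟨A₀ ++ [p], [], [], by simp, by simp [invRev], by simpa using hA, ?_⟩
      simpa using (reduce_eq_self_iff _).2 hA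
    | cons q B₀ =>
      by_cases hc : p.1 = q.1 ∧ p.2 = !q.2
      · have hq : q = (p.1, !p.2) := by
          obtain ⟨h1, h2⟩ := hc
          have : q.2 = !p.2 := by rw [h2]; simp
          exact Prod.ext h1.symm this
        have hA₀ : IsRed A₀ := hA.infix ⟨[], [p], by simp⟩
        have hB₀ : IsRed B₀ := hB.tail
        obtain ⟨A', S₀, B', hA1, hB1, hred, hreduce⟩ := ih B₀ hA₀ hB₀
        refine ⟨A', S₀ ++ [p], B', by rw [hA1, List.append_assoc], ?_, hred, ?_⟩
        · rw [invRev_append', hB1, hq]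
          simp [invRev]
        · have hstep : Red.Step (A₀ ++ [p] ++ (q :: B₀)) (A₀ ++ B₀) := by
            rw [hq, List.append_assoc]
            exact @Red.Step.not α A₀ B₀ p.1 p.2
          rw [reduce.Step.eq hstep, hreduce]
      · refine ⟨A₀ ++ [p], [], q :: B₀, by simp, by simp [invRev], ?_, ?_⟩
        · rw [IsRed, List.Chain', List.isChain_append]
          refine ⟨hA, hB, ?_⟩
          intro x hx y hy
          simp only [List.getLast?_append_of_ne_nil _ (by simp : [p] ≠ ([] : List (α × Bool))),
            List.getLast?_singleton, Option.mem_some_iff] at hx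
          simp only [List.head?_cons, Option.mem_some_iff] at hy
          subst hx; subst hy
          exact hc
        · exact (reduce_eq_self_iff _).2 (by
            rw [IsRed, List.Chain', List.isChain_append]
            refine ⟨hA, hB, ?_⟩
            intro x hx y hy
            simp only [List.getLast?_append_of_ne_nil _ (by simp : [p] ≠ ([] : List (α × Bool))),
              List.getLast?_singleton, Option.mem_some_iff] at hx
            simp only [List.head?_cons, Option.mem_some_iff] at hy
            subst hx; subst hy
            exact hc)

theorem mul_decomp (u v : FreeGroup α) : ∃ a s b : FreeGroup α,
    u = a * s ∧ NC a s ∧ v = s⁻¹ * b ∧ NC s⁻¹ b ∧ NC a b ∧ u * v = a * b := by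
  obtain ⟨A', S, B', hA, hB, hred, hreduce⟩ :=
    cancel_words u.toWord v.toWord (isRed_toWord u) (isRed_toWord v)
  have hrA : IsRed A' := (hA ▸ isRed_toWord u).infix ⟨[], S, by simp⟩
  have hrS : IsRed S := (hA ▸ isRed_toWord u).infix ⟨A', [], by simp⟩
  have hrB : IsRed B' := (hB ▸ isRed_toWord v).infix ⟨invRev S, [], by simp⟩
  have hrIS : IsRed (invRev S) := (hB ▸ isRed_toWord v).infix ⟨[], B', by simp⟩
  have hinv : (mk S)⁻¹ = mk (invRev S) := inv_mk
  refine ⟨mk A', mk S, mk B', ?_, ?_, ?_, ?_, ?_, ?_⟩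
  · rw [mul_mk, ← hA, mk_toWord]
  · rw [nc_iff, toWord_mk_isRed hrA, toWord_mk_isRed hrS, ← hA]
    exact isRed_toWord u
  · rw [hinv, mul_mk, ← hB, mk_toWord]
  · rw [hinv, nc_iff, toWord_mk_isRed hrIS, toWord_mk_isRed hrB, ← hB]
    exact isRed_toWord v
  · rw [nc_iff, toWord_mk_isRed hrA, toWord_mk_isRed hrB]
    exact hred
  · have h1 : u * v = mk (u.toWord ++ v.toWord) := by
      rw [← mul_mk, mk_toWord, mk_toWord]
    rw [h1, mul_mk]
    have : mk (u.toWord ++ v.toWord) = mk (reduce (u.toWord ++ v.toWord)) := reduce.self.symm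
    rw [this, hreduce]

theorem suffix_split {u a s a' s' : FreeGroup α} (h1 : u = a * s) (h2 : NC a s)
    (h3 : u = a' * s') (h4 : NC a' s') (hle : ‖s‖ ≤ ‖s'‖) :
    ∃ t, s' = t * s ∧ NC t s ∧ a = a' * t ∧ NC a' t := by
  have hu1 : u.toWord = a.toWord ++ s.toWord := by rw [h1, h2.toWord_mul_eq]
  have hu2 : u.toWord = a'.toWord ++ s'.toWord := by rw [h3, h4.toWord_mul_eq]
  have heq : a.toWord ++ s.toWord = a'.toWord ++ s'.toWord := by rw [← hu1, ← hu2]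
  rcases List.append_eq_append_iff.1 heq with ⟨T, hT1, hT2⟩ | ⟨T, hT1, hT2⟩
  · -- a'.toWord = a.toWord ++ T, s.toWord = T ++ s'.toWord
    have hlen : T = [] := by
      have l1 : s.toWord.length = T.length + s'.toWord.length := by rw [hT2]; simp
      have l2 : s.toWord.length ≤ s'.toWord.length := hle
      have : T.length = 0 := by omega
      exact List.length_eq_zero_iff.1 this
    subst hlen
    simp only [List.append_nil, List.nil_append] at hT1 hT2
    have hs : s = s' := toWord_injective hT2
    have ha : a = a' := toWord_injective hT1.symm
    subst hs; subst ha
    exact ⟨1, by simp, NC.one_left s, by simp, NC.one_right a⟩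
  · -- a.toWord = a'.toWord ++ T, s'.toWord = T ++ s.toWord
    have hrT : IsRed T := by
      have : IsRed s'.toWord := isRed_toWord s'
      rw [hT2] at this
      exact this.infix ⟨[], s.toWord, by simp⟩
    refine ⟨mk T, ?_, ?_, ?_, ?_⟩
    · rw [← mk_toWord (x := s'), hT2, ← mul_mk, mk_toWord]
    · rw [nc_iff, toWord_mk_isRed hrT, ← hT2]
      exact isRed_toWord s'
    · rw [← mk_toWord (x := a), hT1, ← mul_mk, mk_toWord]
    · rw [nc_iff, toWord_mk_isRed hrT, ← hT1]
      exact isRed_toWord a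

theorem prefix_split {u s a s' a' : FreeGroup α} (h1 : u = s * a) (h2 : NC s a)
    (h3 : u = s' * a') (h4 : NC s' a') (hle : ‖s‖ ≤ ‖s'‖) :
    ∃ t, s' = s * t ∧ NC s t ∧ a = t * a' ∧ NC t a' := by
  have h1' : u⁻¹ = a⁻¹ * s⁻¹ := by rw [h1, mul_inv_rev]
  have h3' : u⁻¹ = a'⁻¹ * s'⁻¹ := by rw [h3, mul_inv_rev]
  have hle' : ‖s⁻¹‖ ≤ ‖s'⁻¹‖ := by rwa [norm_inv_eq, norm_inv_eq]
  obtain ⟨t, ht1, ht2, ht3, ht4⟩ := suffix_split h1' h2.inv h3' h4.inv hle'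
  refine ⟨t⁻¹, ?_, ?_, ?_, ?_⟩
  · have := congrArg (·⁻¹) ht1
    simpa [mul_inv_rev] using this
  · have := ht2.inv
    rwa [inv_inv] at this
  · have := congrArg (·⁻¹) ht3
    simpa [mul_inv_rev] using this
  · have := ht4.inv
    rwa [inv_inv] at this

theorem eq_suffix {Y a s a' s' : FreeGroup α} (h1 : Y = a * s) (h2 : NC a s)
    (h3 : Y = a' * s') (h4 : NC a' s') (hn : ‖s‖ = ‖s'‖) : s = s' := by
  obtain ⟨t, ht1, ht2, _, _⟩ := suffix_split h1 h2 h3 h4 (le_of_eq hn)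
  have : ‖s'‖ = ‖t‖ + ‖s‖ := by rw [ht1]; exact ht2
  have ht : t = 1 := norm_eq_zero.1 (by omega)
  rw [ht1, ht, one_mul]

theorem eq_prefix {Y s a s' a' : FreeGroup α} (h1 : Y = s * a) (h2 : NC s a)
    (h3 : Y = s' * a') (h4 : NC s' a') (hn : ‖s‖ = ‖s'‖) : s = s' := by
  obtain ⟨t, ht1, ht2, _, _⟩ := prefix_split h1 h2 h3 h4 (le_of_eq hn)
  have : ‖s'‖ = ‖s‖ + ‖t‖ := by rw [ht1]; exact ht2
  have ht : t = 1 := norm_eq_zero.1 (by omega)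
  rw [ht1, ht, mul_one]

theorem ne_inv_self {x : FreeGroup α} (hx : x ≠ 1) : x ≠ x⁻¹ := by
  intro h
  have hW : x.toWord = invRev x.toWord := by conv_lhs => rw [h, toWord_inv]
  set W := x.toWord with hWdef
  have hn : W.length ≠ 0 := by
    intro h0
    exact hx (toWord_eq_nil_iff.1 (List.length_eq_zero_iff.1 h0))
  set n := W.length with hndef
  have key : ∀ i j (hi : i < n) (hj : j < n), i + j + 1 = n →
      W.get ⟨i, hi⟩ = ((W.get ⟨j, hj⟩).1, !(W.get ⟨j, hj⟩).2) := by
    intro i j hi hj hij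
    have h1 : W.get ⟨i, hi⟩ = (invRev W).get ⟨i, by rw [invRev_length]; exact hi⟩ :=
      List.get_of_eq hW ⟨i, hi⟩
    rw [h1]
    simp only [invRev, List.get_eq_getElem, List.getElem_reverse, List.getElem_map]
    have hlen : (List.map (fun g : α × Bool => (g.1, !g.2)) W).length = n := by simp [hndef]
    have hidx : (List.map (fun g : α × Bool => (g.1, !g.2)) W).length - 1 - i = j := by
      rw [hlen]; omega
    simp only [hidx]
  rcases Nat.even_or_odd n with ⟨m, hm⟩ | ⟨m, hm⟩
  · have hm1 : 1 ≤ m := by omega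
    have hchain := (List.isChain_iff_getElem.1 (isRed_toWord x)) (m - 1) (by
      rw [← hWdef, ← hndef]; omega)
    have hkey := key (m - 1) (m - 1 + 1) (by omega) (by omega) (by omega)
    simp only [List.get_eq_getElem] at hkey
    exact hchain ⟨by rw [hkey], by rw [hkey]⟩
  · have hkey := key m m (by omega) (by omega) (by omega)
    have := congrArg Prod.snd hkey
    simp at this

theorem overlap_le {u a s b : FreeGroup α} (h1 : u = a * s) (h2 : NC a s)
    (h3 : u = s⁻¹ * b) (h4 : NC s⁻¹ b) : 2 * ‖s‖ ≤ ‖u‖ ∧ (2 * ‖s‖ = ‖u‖ → u = 1) := by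
  have hna : ‖u‖ = ‖a‖ + ‖s‖ := by rw [h1]; exact h2
  have hnb : ‖u‖ = ‖s‖ + ‖b‖ := by
    rw [h3]
    have h4' := h4
    unfold NC at h4'
    rw [norm_inv_eq] at h4'
    exact h4'
  constructor
  · by_contra hcon
    push_neg at hcon
    have hlt : ‖a‖ < ‖s‖ := by omega
    obtain ⟨t, ht1, ht2, ht3, ht4⟩ := prefix_split h1 h2 h3 h4
      (by rw [norm_inv_eq]; omega)
    have hs1 : s = t * b := ht3
    have hs2 : s = t⁻¹ * a⁻¹ := by
      have := congrArg (·⁻¹) ht1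
      simpa [mul_inv_rev] using this
    have hNC2 : NC t⁻¹ a⁻¹ := ht2.inv
    have htt : t = t⁻¹ := eq_prefix hs1 ht4 hs2 hNC2 (by rw [norm_inv_eq])
    have htn : t ≠ 1 := by
      intro h0
      rw [h0, mul_one] at ht1
      have : ‖s‖ = ‖a‖ := by rw [← norm_inv_eq (x := s), ht1]
      omega
    exact ne_inv_self htn htt
  · intro heq
    have hh : ‖a‖ = ‖s⁻¹‖ := by rw [norm_inv_eq]; omega
    have := eq_prefix h1 h2 h3 h4 hh
    rw [h1, this]
    exact inv_mul_cancel s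

theorem middle_split {u a c₁ c₂ b : FreeGroup α} (h1 : u = a * c₁) (h2 : NC a c₁)
    (h3 : u = c₂ * b) (h4 : NC c₂ b) (hl : ‖a‖ + ‖b‖ ≤ ‖u‖) :
    ∃ z, u = a * z * b ∧ ‖z‖ + ‖a‖ + ‖b‖ = ‖u‖ := by
  have hna : ‖u‖ = ‖a‖ + ‖c₁‖ := by rw [h1]; exact h2
  have hnc : ‖u‖ = ‖c₂‖ + ‖b‖ := by rw [h3]; exact h4
  obtain ⟨t, _, _, ht3, ht4⟩ := prefix_split h1 h2 h3 h4 (by omega)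
  refine ⟨t, ?_, ?_⟩
  · rw [h1, ht3, mul_assoc]
  · have : ‖c₁‖ = ‖t‖ + ‖b‖ := by rw [ht3]; exact ht4
    omega


section Counting

variable {β : Type*} [DecidableEq β]

theorem counting_aux (f : α × Bool → FreeGroup β) (Lset : Set (FreeGroup β))
    (hfL : ∀ ℓ, f ℓ ∈ Lset) (hne1 : ∀ u ∈ Lset, u ≠ (1 : FreeGroup β))
    (hf2 : ∀ ℓ ℓ' : α × Bool, ¬(ℓ.1 = ℓ'.1 ∧ ℓ.2 = !ℓ'.2) → f ℓ * f ℓ' ≠ 1)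
    (H1 : ∀ u ∈ Lset, ∀ v ∈ Lset, u * v ≠ 1 →
      ‖u‖ + ‖v‖ ≤ ‖u * v‖ + ‖u‖ ∧ ‖u‖ + ‖v‖ ≤ ‖u * v‖ + ‖v‖)
    (H2 : ∀ u ∈ Lset, ∀ v ∈ Lset, ∀ w ∈ Lset, u * v ≠ 1 → v * w ≠ 1 →
      ‖u‖ + ‖w‖ + 2 ≤ ‖u * v‖ + ‖v * w‖)
    (W₀ : List (α × Bool)) : ∀ ℓ : α × Bool, IsRed (W₀ ++ [ℓ]) →
    ∃ c m e : FreeGroup β,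
      (List.map f (W₀ ++ [ℓ])).prod = c * m ∧ NC c m ∧
      f ℓ = e * m ∧ NC e m ∧ 1 ≤ ‖m‖ ∧
      (W₀ ++ [ℓ]).length - 1 + ‖m‖ ≤ ‖(List.map f (W₀ ++ [ℓ])).prod‖ ∧
      (∀ v ∈ Lset, f ℓ * v ≠ 1 → ‖f ℓ‖ + ‖v‖ + 2 ≤ ‖f ℓ * v‖ + 2 * ‖m‖) := by
  induction W₀ using List.reverseRecOn with
  | nil =>
    intro ℓ _
    have hu1 : f ℓ ≠ 1 := hne1 _ (hfL ℓ)
    have hunorm : 1 ≤ ‖f ℓ‖ := by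
      rcases Nat.eq_zero_or_pos ‖f ℓ‖ with h | h
      · exact absurd (norm_eq_zero.1 h) hu1
      · exact h
    refine ⟨1, f ℓ, 1, by simp, NC.one_left _, by simp, NC.one_left _, hunorm, by simp, ?_⟩
    intro v hv huv
    obtain ⟨a, s, b, hu, hNCas, hvd, hNCsb, hNCab, huvab⟩ := mul_decomp (f ℓ) v
    have nu : ‖f ℓ‖ = ‖a‖ + ‖s‖ := by rw [hu]; exact hNCas
    have nv : ‖v‖ = ‖s‖ + ‖b‖ := by
      rw [hvd]
      have h := hNCsb
      unfold NC at h
      rwa [norm_inv_eq] at h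
    have nuv : ‖f ℓ * v‖ = ‖a‖ + ‖b‖ := by rw [huvab]; exact hNCab
    have hH := H1 _ (hfL ℓ) v hv huv
    omega
  | append_singleton W₀ ℓ₀ ih =>
    intro ℓ hred
    have hprev : IsRed (W₀ ++ [ℓ₀]) := hred.infix ⟨[], [ℓ], by simp⟩
    obtain ⟨c, m, e, hprod, hNCcm, hfeq, hNCem, hm1, hlen, hnext⟩ := ih ℓ₀ hprev
    set u := f ℓ₀ with hu_def
    set v := f ℓ with hv_def
    have hadj : ¬(ℓ₀.1 = ℓ.1 ∧ ℓ₀.2 = !ℓ.2) := by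
      have h := (List.isChain_append.1 hred).2.2
      apply h ℓ₀ _ ℓ _
      · rw [List.getLast?_append_of_ne_nil _ (by simp : [ℓ₀] ≠ ([] : List (α × Bool)))]
        rfl
      · rfl
    have huv : u * v ≠ 1 := hf2 _ _ hadj
    obtain ⟨a, s, b, hu, hNCas, hvd, hNCsb, hNCab, huvab⟩ := mul_decomp u v
    have nu : ‖u‖ = ‖a‖ + ‖s‖ := by rw [hu]; exact hNCas
    have nv : ‖v‖ = ‖s‖ + ‖b‖ := by
      rw [hvd]
      have h := hNCsb
      unfold NC at h
      rwa [norm_inv_eq] at h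
    have nuv : ‖u * v‖ = ‖a‖ + ‖b‖ := by rw [huvab]; exact hNCab
    have hbound := hnext v (hfL ℓ) huv
    have hs_lt : ‖s‖ + 1 ≤ ‖m‖ := by omega
    obtain ⟨t, hm_eq, hNCts, ha_eq, hNCet⟩ := suffix_split hu hNCas hfeq hNCem (by omega)
    have nm : ‖m‖ = ‖t‖ + ‖s‖ := by rw [hm_eq]; exact hNCts
    have ht1 : 1 ≤ ‖t‖ := by omega
    have htne : t.toWord ≠ [] := by
      intro h0
      have : ‖t‖ = 0 := by unfold FreeGroup.norm; rw [h0]; rfl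
      omega
    -- words
    have hWm : m.toWord = t.toWord ++ s.toWord := by
      rw [hm_eq]
      exact hNCts.toWord_mul_eq
    have hWa : a.toWord = e.toWord ++ t.toWord := by
      rw [ha_eq]
      exact hNCet.toWord_mul_eq
    have hIR1 : IsRed (c.toWord ++ (t.toWord ++ s.toWord)) := by
      rw [← hWm]; exact nc_iff.1 hNCcm
    have hNCct : NC c t := by
      rw [nc_iff]
      exact hIR1.infix ⟨[], s.toWord, by simp⟩
    have hIRct : IsRed (c.toWord ++ t.toWord) := nc_iff.1 hNCct
    have hIR2 : IsRed (t.toWord ++ b.toWord) := by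
      have h := nc_iff.1 hNCab
      rw [hWa] at h
      exact h.infix ⟨e.toWord, [], by simp⟩
    have hNCctb : NC (c * t) b := by
      rw [nc_iff, hNCct.toWord_mul_eq]
      have := isRed_glue hIRct hIR2 htne
      rwa [← List.append_assoc] at this
    have hprodnew : (List.map f ((W₀ ++ [ℓ₀]) ++ [ℓ])).prod =
        (List.map f (W₀ ++ [ℓ₀])).prod * v := by
      rw [List.map_append, List.prod_append]
      simp [hv_def]
    refine ⟨c * t, b, s⁻¹, ?_, hNCctb, hvd, hNCsb, ?_, ?_, ?_⟩
    · rw [hprodnew, hprod, hm_eq, hvd]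
      group
    · -- 1 ≤ ‖b‖
      have hH := H1 u (hfL ℓ₀) v (hfL ℓ) huv
      have hv1 : v ≠ 1 := hne1 _ (hfL ℓ)
      have : 1 ≤ ‖v‖ := by
        rcases Nat.eq_zero_or_pos ‖v‖ with h | h
        · exact absurd (norm_eq_zero.1 h) hv1
        · exact h
      omega
    · -- length bound
      have hnormold : ‖(List.map f (W₀ ++ [ℓ₀])).prod‖ = ‖c‖ + ‖m‖ := by
        rw [hprod]; exact hNCcm
      have hnormnew : ‖(List.map f ((W₀ ++ [ℓ₀]) ++ [ℓ])).prod‖ = ‖c‖ + ‖t‖ + ‖b‖ := by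
        rw [hprodnew, hprod, hm_eq, hvd]
        have heq : c * (t * s) * (s⁻¹ * b) = (c * t) * b := by group
        rw [heq]
        have h2 : ‖(c * t) * b‖ = ‖c * t‖ + ‖b‖ := hNCctb
        rw [h2, hNCct]
      simp only [List.length_append, List.length_singleton] at hlen ⊢
      omega
    · intro v' hv' hvv'
      have hH2 := H2 u (hfL ℓ₀) v (hfL ℓ) v' hv' huv hvv'
      omega

theorem counting (f : α × Bool → FreeGroup β) (Lset : Set (FreeGroup β))
    (hfL : ∀ ℓ, f ℓ ∈ Lset) (hne1 : ∀ u ∈ Lset, u ≠ (1 : FreeGroup β))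
    (hf2 : ∀ ℓ ℓ' : α × Bool, ¬(ℓ.1 = ℓ'.1 ∧ ℓ.2 = !ℓ'.2) → f ℓ * f ℓ' ≠ 1)
    (H1 : ∀ u ∈ Lset, ∀ v ∈ Lset, u * v ≠ 1 →
      ‖u‖ + ‖v‖ ≤ ‖u * v‖ + ‖u‖ ∧ ‖u‖ + ‖v‖ ≤ ‖u * v‖ + ‖v‖)
    (H2 : ∀ u ∈ Lset, ∀ v ∈ Lset, ∀ w ∈ Lset, u * v ≠ 1 → v * w ≠ 1 →
      ‖u‖ + ‖w‖ + 2 ≤ ‖u * v‖ + ‖v * w‖)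
    (W : List (α × Bool)) (hW : IsRed W) : W.length ≤ ‖(List.map f W).prod‖ := by
  rcases List.eq_nil_or_concat W with rfl | ⟨W₀, ℓ, rfl⟩
  · simp
  · rw [List.concat_eq_append] at hW ⊢
    obtain ⟨c, m, e, _, _, _, _, hm1, hlen, _⟩ :=
      counting_aux f Lset hfL hne1 hf2 H1 H2 W₀ ℓ hW
    simp only [List.length_append, List.length_singleton] at hlen ⊢
    omega

end Counting


section Star

theorem sq_bound (u : FreeGroup α) : ‖u‖ + ‖u‖ ≤ ‖u * u‖ + ‖u‖ := by
  obtain ⟨a, s, b, h1, h2, h3, h4, _, h6⟩ := mul_decomp u u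
  obtain ⟨hle, _⟩ := overlap_le h1 h2 h3 h4
  have nu : ‖u‖ = ‖a‖ + ‖s‖ := by rw [h1]; exact h2
  have nu2 : ‖u‖ = ‖s‖ + ‖b‖ := by
    rw [h3]
    have h := h4
    unfold NC at h
    rwa [norm_inv_eq] at h
  have nuu : ‖u * u‖ + 2 * ‖s‖ = ‖u‖ + ‖u‖ := by
    have : ‖u * u‖ = ‖a‖ + ‖b‖ := by rw [h6]; exact nc_iff.2 (nc_iff.1 ‹NC a b›)
    omega
  omega

theorem norm_inv_mul (u v : FreeGroup α) : ‖u⁻¹ * v⁻¹‖ = ‖v * u‖ := by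
  rw [← mul_inv_rev, norm_inv_eq]

theorem H1_of (x y : FreeGroup α)
    (ItP : ‖x‖ + ‖y‖ ≤ ‖x‖ + ‖x * y‖)
    (ItM : ‖x‖ + ‖y‖ ≤ ‖x‖ + ‖x⁻¹ * y‖)
    (IsP : ‖x‖ + ‖y‖ ≤ ‖x‖ + ‖y * x‖)
    (IsM : ‖x‖ + ‖y‖ ≤ ‖x‖ + ‖y * x⁻¹‖)
    (IrP : ‖x‖ + ‖y‖ ≤ ‖x * y‖ + ‖y‖)
    (IrM : ‖x‖ + ‖y‖ ≤ ‖x * y⁻¹‖ + ‖y‖)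
    (IlP : ‖x‖ + ‖y‖ ≤ ‖y * x‖ + ‖y‖)
    (IlM : ‖x‖ + ‖y‖ ≤ ‖y⁻¹ * x‖ + ‖y‖) :
    ∀ u ∈ ({x, x⁻¹, y, y⁻¹} : Set (FreeGroup α)), ∀ v ∈ ({x, x⁻¹, y, y⁻¹} : Set (FreeGroup α)),
      u * v ≠ 1 → ‖u‖ + ‖v‖ ≤ ‖u * v‖ + ‖u‖ ∧ ‖u‖ + ‖v‖ ≤ ‖u * v‖ + ‖v‖ := by
  have hsx := sq_bound x
  have hsy := sq_bound y
  have nx : ‖x⁻¹‖ = ‖x‖ := norm_inv_eq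
  have ny : ‖y⁻¹‖ = ‖y‖ := norm_inv_eq
  have e1 : ‖x⁻¹ * y⁻¹‖ = ‖y * x‖ := norm_inv_mul x y
  have e2 : ‖y⁻¹ * x⁻¹‖ = ‖x * y‖ := norm_inv_mul y x
  have e3 : ‖x * y⁻¹‖ = ‖y * x⁻¹‖ := by
    rw [← norm_inv_eq (x := x * y⁻¹), mul_inv_rev, inv_inv]
  have e4 : ‖x⁻¹ * y‖ = ‖y⁻¹ * x‖ := by
    rw [← norm_inv_eq (x := x⁻¹ * y), mul_inv_rev, inv_inv]
  have e5 : ‖x⁻¹ * x⁻¹‖ = ‖x * x‖ := norm_inv_mul x x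
  have e6 : ‖y⁻¹ * y⁻¹‖ = ‖y * y‖ := norm_inv_mul y y
  intro u hu v hv huv
  simp only [Set.mem_insert_iff, Set.mem_singleton_iff] at hu hv
  rcases hu with rfl | rfl | rfl | rfl <;> rcases hv with rfl | rfl | rfl | rfl
  all_goals try (exfalso; apply huv; group; done)
  all_goals constructor <;> omega

theorem star_canon {v Z s₁ s₂ : FreeGroup α}
    (hKv : ∀ Y P T z : FreeGroup α, (Y = Z ∨ Y = Z⁻¹) → v = P * T → ‖P‖ = ‖T‖ →
      1 ≤ ‖P‖ → ‖v‖ = 2 * ‖P‖ → v * Y = P * z * P⁻¹ → ‖z‖ + 2 * ‖P‖ = ‖Y‖ → False)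
    (Y a₁ b₂ : FreeGroup α)
    (hYcase : Y = Z ∨ Y = Z⁻¹)
    (hY1 : Y = a₁ * s₁) (hNC1 : NC a₁ s₁)
    (hY2 : Y = s₂⁻¹ * b₂) (hNC2' : NC s₂⁻¹ b₂)
    (hPT : v = s₁⁻¹ * s₂)
    (hss : ‖s₁‖ = ‖s₂‖) (hv2s : ‖v‖ = 2 * ‖s₁‖) (hm1 : 1 ≤ ‖s₁‖)
    (h2mu : 2 * ‖s₁‖ ≤ ‖Y‖) : False := by
  have hl : ‖s₂⁻¹‖ + ‖s₁‖ ≤ ‖Y‖ := by rw [norm_inv_eq]; omega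
  obtain ⟨z, hz1, hz2⟩ := middle_split hY2 hNC2' hY1 hNC1 hl
  refine hKv Y s₁⁻¹ s₂ z hYcase hPT ?_ ?_ ?_ ?_ ?_
  · rw [norm_inv_eq]; exact hss
  · rw [norm_inv_eq]; exact hm1
  · rw [norm_inv_eq]; exact hv2s
  · rw [hPT, hz1]; group
  · rw [norm_inv_eq] at hz2 ⊢
    omega

theorem star_case {v Z u w a₁ s₁ s₂ b₂ : FreeGroup α}
    (hvne : v ≠ 1)
    (hKv : ∀ Y P T z : FreeGroup α, (Y = Z ∨ Y = Z⁻¹) → v = P * T → ‖P‖ = ‖T‖ →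
      1 ≤ ‖P‖ → ‖v‖ = 2 * ‖P‖ → v * Y = P * z * P⁻¹ → ‖z‖ + 2 * ‖P‖ = ‖Y‖ → False)
    (hu4 : u = Z ∨ u = Z⁻¹ ∨ u = v ∨ u * v = 1)
    (hw4 : w = Z ∨ w = Z⁻¹ ∨ w = v ∨ v * w = 1)
    (huv : u * v ≠ 1) (hvw : v * w ≠ 1)
    (hcaseuv : u = v → False) (hcasewv : w = v → False)
    (hu1 : u = a₁ * s₁) (hNC1 : NC a₁ s₁)
    (hw2 : w = s₂⁻¹ * b₂) (hNC2' : NC s₂⁻¹ b₂)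
    (hPT : v = s₁⁻¹ * s₂)
    (hss : ‖s₁‖ = ‖s₂‖) (hv2s : ‖v‖ = 2 * ‖s₁‖) (hm1 : 1 ≤ ‖s₁‖)
    (h2mu : 2 * ‖s₁‖ ≤ ‖u‖) : False := by
  have hZZ : ∀ (huZ : u = Z) (hwZ : w = Z), False := by
    intro huZ hwZ
    have huw : u = w := by rw [huZ, hwZ]
    exact star_canon hKv u a₁ b₂ (Or.inl huZ) hu1 hNC1 (huw ▸ hw2) hNC2'
      hPT hss hv2s hm1 h2mu
  have hZZ' : ∀ (huZ : u = Z⁻¹) (hwZ : w = Z⁻¹), False := by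
    intro huZ hwZ
    have huw : u = w := by rw [huZ, hwZ]
    exact star_canon hKv u a₁ b₂ (Or.inr huZ) hu1 hNC1 (huw ▸ hw2) hNC2'
      hPT hss hv2s hm1 h2mu
  have hmix1 : ∀ (huZ : u = Z) (hwZ : w = Z⁻¹), False := by
    intro huZ hwZ
    have hw' : u = b₂⁻¹ * s₂ := by
      have h := congrArg (·⁻¹) hw2
      simp only [mul_inv_rev, inv_inv] at h
      rw [hwZ] at h
      rw [huZ, ← h]
      simp
    have hNCw' : NC b₂⁻¹ s₂ := by
      have h := hNC2'.inv
      rwa [inv_inv] at h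
    have heq : s₁ = s₂ := eq_suffix hu1 hNC1 hw' hNCw' hss
    rw [hPT, heq, inv_mul_cancel] at hvne
    exact hvne rfl
  have hmix2 : ∀ (huZ : u = Z⁻¹) (hwZ : w = Z), False := by
    intro huZ hwZ
    have hu' : w = s₁⁻¹ * a₁⁻¹ := by
      have h := congrArg (·⁻¹) hu1
      simp only [mul_inv_rev] at h
      rw [huZ, inv_inv] at h
      rw [hwZ, ← h]
    have hNCu' : NC s₁⁻¹ a₁⁻¹ := hNC1.inv
    have heq : s₁⁻¹ = s₂⁻¹ := eq_prefix hu' hNCu' hw2 hNC2'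
      (by rw [norm_inv_eq, norm_inv_eq]; exact hss)
    have heq' : s₁ = s₂ := by
      have h := congrArg (·⁻¹) heq
      simpa using h
    rw [hPT, heq', inv_mul_cancel] at hvne
    exact hvne rfl
  rcases hu4 with huZ | huZ | huveq | huv1
  · rcases hw4 with hwZ | hwZ | hwveq | hvw1
    · exact hZZ huZ hwZ
    · exact hmix1 huZ hwZ
    · exact hcasewv hwveq
    · exact hvw hvw1
  · rcases hw4 with hwZ | hwZ | hwveq | hvw1
    · exact hmix2 huZ hwZ
    · exact hZZ' huZ hwZ
    · exact hcasewv hwveq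
    · exact hvw hvw1
  · exact hcaseuv huveq
  · exact huv huv1

theorem star_of (x y : FreeGroup α) (hx : x ≠ 1) (hy : y ≠ 1)
    (H1 : ∀ u ∈ ({x, x⁻¹, y, y⁻¹} : Set (FreeGroup α)),
      ∀ v ∈ ({x, x⁻¹, y, y⁻¹} : Set (FreeGroup α)),
      u * v ≠ 1 → ‖u‖ + ‖v‖ ≤ ‖u * v‖ + ‖u‖ ∧ ‖u‖ + ‖v‖ ≤ ‖u * v‖ + ‖v‖)
    (HK : ∀ X Y P T z : FreeGroup α,
      ((X = x ∨ X = x⁻¹) ∧ (Y = y ∨ Y = y⁻¹)) ∨ ((X = y ∨ X = y⁻¹) ∧ (Y = x ∨ Y = x⁻¹)) →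
      X = P * T → ‖P‖ = ‖T‖ → 1 ≤ ‖P‖ → ‖X‖ = 2 * ‖P‖ →
      X * Y = P * z * P⁻¹ → ‖z‖ + 2 * ‖P‖ = ‖Y‖ → False) :
    ∀ u ∈ ({x, x⁻¹, y, y⁻¹} : Set (FreeGroup α)),
    ∀ v ∈ ({x, x⁻¹, y, y⁻¹} : Set (FreeGroup α)),
    ∀ w ∈ ({x, x⁻¹, y, y⁻¹} : Set (FreeGroup α)),
      u * v ≠ 1 → v * w ≠ 1 → ‖u‖ + ‖w‖ + 2 ≤ ‖u * v‖ + ‖v * w‖ := by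
  intro u hu v hv w hw huv hvw
  by_contra hcon
  push_neg at hcon
  have hne : ∀ g ∈ ({x, x⁻¹, y, y⁻¹} : Set (FreeGroup α)), g ≠ 1 := by
    intro g hg
    simp only [Set.mem_insert_iff, Set.mem_singleton_iff] at hg
    rcases hg with rfl | rfl | rfl | rfl
    · exact hx
    · simpa using hx
    · exact hy
    · simpa using hy
  have hvne : v ≠ 1 := hne v hv
  obtain ⟨a₁, s₁, b₁, hu1, hNC1, hv1, hNC1', hNC1'', huv1⟩ := mul_decomp u v
  obtain ⟨a₂, s₂, b₂, hv2, hNC2, hw2, hNC2', hNC2'', hvw2⟩ := mul_decomp v w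
  have n_u : ‖u‖ = ‖a₁‖ + ‖s₁‖ := by rw [hu1]; exact hNC1
  have n_v : ‖v‖ = ‖s₁‖ + ‖b₁‖ := by
    rw [hv1]
    have h := hNC1'
    unfold NC at h
    rwa [norm_inv_eq] at h
  have n_v' : ‖v‖ = ‖a₂‖ + ‖s₂‖ := by rw [hv2]; exact hNC2
  have n_w : ‖w‖ = ‖s₂‖ + ‖b₂‖ := by
    rw [hw2]
    have h := hNC2'
    unfold NC at h
    rwa [norm_inv_eq] at h
  have n_uv : ‖u * v‖ = ‖a₁‖ + ‖b₁‖ := by rw [huv1]; exact hNC1''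
  have n_vw : ‖v * w‖ = ‖a₂‖ + ‖b₂‖ := by rw [hvw2]; exact hNC2''
  obtain ⟨hb1, hb2⟩ := H1 u hu v hv huv
  obtain ⟨hb3, hb4⟩ := H1 v hv w hw hvw
  have hss : ‖s₁‖ = ‖s₂‖ := by omega
  have hv2s : ‖v‖ = 2 * ‖s₁‖ := by omega
  have hm1 : 1 ≤ ‖s₁‖ := by
    rcases Nat.eq_zero_or_pos ‖s₁‖ with h | h
    · exact absurd (FreeGroup.norm_eq_zero.1 (by omega : ‖v‖ = 0)) hvne
    · exact h
  have h2mu : 2 * ‖s₁‖ ≤ ‖u‖ := by omega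
  have ha₂ : s₁⁻¹ = a₂ := eq_prefix hv1 hNC1' hv2 hNC2 (by rw [norm_inv_eq]; omega)
  have hPT : v = s₁⁻¹ * s₂ := by rw [hv2, ← ha₂]
  have hcaseuv : u = v → False := by
    intro huveq
    have heq : s₁ = s₂ := eq_suffix (huveq ▸ hu1) hNC1 hv2 hNC2 hss
    rw [hPT, heq, inv_mul_cancel] at hvne
    exact hvne rfl
  have hcasewv : w = v → False := by
    intro hwveq
    have heq : s₁⁻¹ = s₂⁻¹ :=
      eq_prefix hv1 hNC1' (hwveq ▸ hw2) hNC2' (by rw [norm_inv_eq, norm_inv_eq]; exact hss)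
    have heq' : s₁ = s₂ := by
      have h := congrArg (·⁻¹) heq
      simpa using h
    rw [hPT, heq', inv_mul_cancel] at hvne
    exact hvne rfl
  simp only [Set.mem_insert_iff, Set.mem_singleton_iff] at hu hw
  rcases hv with hvx | hvx | hvx | hvx
  case inl =>
    -- v = x, other generator is y
    have hKv : ∀ Y P T z : FreeGroup α, (Y = y ∨ Y = y⁻¹) → v = P * T → ‖P‖ = ‖T‖ →
        1 ≤ ‖P‖ → ‖v‖ = 2 * ‖P‖ → v * Y = P * z * P⁻¹ → ‖z‖ + 2 * ‖P‖ = ‖Y‖ → False := by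
      intro Y P T z hYc h1 h2 h3 h4 h5 h6
      exact HK v Y P T z (Or.inl ⟨Or.inl hvx, hYc⟩) h1 h2 h3 h4 h5 h6
    have hu4 : u = y ∨ u = y⁻¹ ∨ u = v ∨ u * v = 1 := by
      rcases hu with h | h | h | h
      · exact Or.inr (Or.inr (Or.inl (by rw [h, hvx])))
      · exact Or.inr (Or.inr (Or.inr (by rw [h, hvx]; group)))
      · exact Or.inl h
      · exact Or.inr (Or.inl h)
    have hw4 : w = y ∨ w = y⁻¹ ∨ w = v ∨ v * w = 1 := by
      rcases hw with h | h | h | h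
      · exact Or.inr (Or.inr (Or.inl (by rw [h, hvx])))
      · exact Or.inr (Or.inr (Or.inr (by rw [h, hvx]; group)))
      · exact Or.inl h
      · exact Or.inr (Or.inl h)
    exact star_case hvne hKv hu4 hw4 huv hvw hcaseuv hcasewv hu1 hNC1 hw2 hNC2'
      hPT hss hv2s hm1 h2mu
  case inr.inl =>
    -- v = x⁻¹
    have hKv : ∀ Y P T z : FreeGroup α, (Y = y ∨ Y = y⁻¹) → v = P * T → ‖P‖ = ‖T‖ →
        1 ≤ ‖P‖ → ‖v‖ = 2 * ‖P‖ → v * Y = P * z * P⁻¹ → ‖z‖ + 2 * ‖P‖ = ‖Y‖ → False := by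
      intro Y P T z hYc h1 h2 h3 h4 h5 h6
      exact HK v Y P T z (Or.inl ⟨Or.inr hvx, hYc⟩) h1 h2 h3 h4 h5 h6
    have hu4 : u = y ∨ u = y⁻¹ ∨ u = v ∨ u * v = 1 := by
      rcases hu with h | h | h | h
      · exact Or.inr (Or.inr (Or.inr (by rw [h, hvx]; group)))
      · exact Or.inr (Or.inr (Or.inl (by rw [h, hvx])))
      · exact Or.inl h
      · exact Or.inr (Or.inl h)
    have hw4 : w = y ∨ w = y⁻¹ ∨ w = v ∨ v * w = 1 := by
      rcases hw with h | h | h | h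
      · exact Or.inr (Or.inr (Or.inr (by rw [h, hvx]; group)))
      · exact Or.inr (Or.inr (Or.inl (by rw [h, hvx])))
      · exact Or.inl h
      · exact Or.inr (Or.inl h)
    exact star_case hvne hKv hu4 hw4 huv hvw hcaseuv hcasewv hu1 hNC1 hw2 hNC2'
      hPT hss hv2s hm1 h2mu
  case inr.inr.inl =>
    -- v = y
    have hKv : ∀ Y P T z : FreeGroup α, (Y = x ∨ Y = x⁻¹) → v = P * T → ‖P‖ = ‖T‖ →
        1 ≤ ‖P‖ → ‖v‖ = 2 * ‖P‖ → v * Y = P * z * P⁻¹ → ‖z‖ + 2 * ‖P‖ = ‖Y‖ → False := by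
      intro Y P T z hYc h1 h2 h3 h4 h5 h6
      exact HK v Y P T z (Or.inr ⟨Or.inl hvx, hYc⟩) h1 h2 h3 h4 h5 h6
    have hu4 : u = x ∨ u = x⁻¹ ∨ u = v ∨ u * v = 1 := by
      rcases hu with h | h | h | h
      · exact Or.inl h
      · exact Or.inr (Or.inl h)
      · exact Or.inr (Or.inr (Or.inl (by rw [h, hvx])))
      · exact Or.inr (Or.inr (Or.inr (by rw [h, hvx]; group)))
    have hw4 : w = x ∨ w = x⁻¹ ∨ w = v ∨ v * w = 1 := by
      rcases hw with h | h | h | h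
      · exact Or.inl h
      · exact Or.inr (Or.inl h)
      · exact Or.inr (Or.inr (Or.inl (by rw [h, hvx])))
      · exact Or.inr (Or.inr (Or.inr (by rw [h, hvx]; group)))
    exact star_case hvne hKv hu4 hw4 huv hvw hcaseuv hcasewv hu1 hNC1 hw2 hNC2'
      hPT hss hv2s hm1 h2mu
  case inr.inr.inr =>
    -- v = y⁻¹
    have hKv : ∀ Y P T z : FreeGroup α, (Y = x ∨ Y = x⁻¹) → v = P * T → ‖P‖ = ‖T‖ →
        1 ≤ ‖P‖ → ‖v‖ = 2 * ‖P‖ → v * Y = P * z * P⁻¹ → ‖z‖ + 2 * ‖P‖ = ‖Y‖ → False := by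
      intro Y P T z hYc h1 h2 h3 h4 h5 h6
      exact HK v Y P T z (Or.inr ⟨Or.inr hvx, hYc⟩) h1 h2 h3 h4 h5 h6
    have hu4 : u = x ∨ u = x⁻¹ ∨ u = v ∨ u * v = 1 := by
      rcases hu with h | h | h | h
      · exact Or.inl h
      · exact Or.inr (Or.inl h)
      · exact Or.inr (Or.inr (Or.inr (by rw [h, hvx]; group)))
      · exact Or.inr (Or.inr (Or.inl (by rw [h, hvx])))
    have hw4 : w = x ∨ w = x⁻¹ ∨ w = v ∨ v * w = 1 := by
      rcases hw with h | h | h | h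
      · exact Or.inl h
      · exact Or.inr (Or.inl h)
      · exact Or.inr (Or.inr (Or.inr (by rw [h, hvx]; group)))
      · exact Or.inr (Or.inr (Or.inl (by rw [h, hvx])))
    exact star_case hvne hKv hu4 hw4 huv hvw hcaseuv hcasewv hu1 hNC1 hw2 hNC2'
      hPT hss hv2s hm1 h2mu

end Star


section F2

abbrev F2 := FreeGroup (Fin 2)

/-- The commutator `[a,b]`. -/
def Cc : F2 := of 0 * of 1 * (of 0)⁻¹ * (of 1)⁻¹

/-- An automorphism is *good* if it sends `Cc` to a conjugate of `Cc` or `Cc⁻¹`. -/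
def Good (ρ : MulAut F2) : Prop :=
  ∃ g : F2, ρ Cc = g * Cc * g⁻¹ ∨ ρ Cc = g * Cc⁻¹ * g⁻¹

/-- Build an automorphism of `F2` from generator images and an inverse recipe. -/
def mkAut (f g : Fin 2 → F2)
    (hgf : ∀ i, FreeGroup.lift g (FreeGroup.lift f (of i)) = of i)
    (hfg : ∀ i, FreeGroup.lift f (FreeGroup.lift g (of i)) = of i) : MulAut F2 :=
  { toFun := FreeGroup.lift f
    invFun := FreeGroup.lift g
    left_inv := fun z => by
      have h : (FreeGroup.lift g).comp (FreeGroup.lift f) = MonoidHom.id F2 :=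
        FreeGroup.ext_hom _ _ (by simpa using hgf)
      simpa using DFunLike.congr_fun h z
    right_inv := fun z => by
      have h : (FreeGroup.lift f).comp (FreeGroup.lift g) = MonoidHom.id F2 :=
        FreeGroup.ext_hom _ _ (by simpa using hfg)
      simpa using DFunLike.congr_fun h z
    map_mul' := map_mul _ }

@[simp] theorem mkAut_apply (f g : Fin 2 → F2) (hgf hfg) (z : F2) :
    mkAut f g hgf hfg z = FreeGroup.lift f z := rfl

def autTP : MulAut F2 := mkAut ![of 0, of 0 * of 1] ![of 0, (of 0)⁻¹ * of 1]
  (by intro i; fin_cases i <;> simp [FreeGroup.lift_apply_of] <;> group)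
  (by intro i; fin_cases i <;> simp [FreeGroup.lift_apply_of] <;> group)

def autTM : MulAut F2 := mkAut ![of 0, (of 0)⁻¹ * of 1] ![of 0, of 0 * of 1]
  (by intro i; fin_cases i <;> simp [FreeGroup.lift_apply_of] <;> group)
  (by intro i; fin_cases i <;> simp [FreeGroup.lift_apply_of] <;> group)

def autSP : MulAut F2 := mkAut ![of 0, of 1 * of 0] ![of 0, of 1 * (of 0)⁻¹]
  (by intro i; fin_cases i <;> simp [FreeGroup.lift_apply_of] <;> group)
  (by intro i; fin_cases i <;> simp [FreeGroup.lift_apply_of] <;> group)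

def autSM : MulAut F2 := mkAut ![of 0, of 1 * (of 0)⁻¹] ![of 0, of 1 * of 0]
  (by intro i; fin_cases i <;> simp [FreeGroup.lift_apply_of] <;> group)
  (by intro i; fin_cases i <;> simp [FreeGroup.lift_apply_of] <;> group)

def autRP : MulAut F2 := mkAut ![of 0 * of 1, of 1] ![of 0 * (of 1)⁻¹, of 1]
  (by intro i; fin_cases i <;> simp [FreeGroup.lift_apply_of] <;> group)
  (by intro i; fin_cases i <;> simp [FreeGroup.lift_apply_of] <;> group)

def autRM : MulAut F2 := mkAut ![of 0 * (of 1)⁻¹, of 1] ![of 0 * of 1, of 1]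
  (by intro i; fin_cases i <;> simp [FreeGroup.lift_apply_of] <;> group)
  (by intro i; fin_cases i <;> simp [FreeGroup.lift_apply_of] <;> group)

def autLP : MulAut F2 := mkAut ![of 1 * of 0, of 1] ![(of 1)⁻¹ * of 0, of 1]
  (by intro i; fin_cases i <;> simp [FreeGroup.lift_apply_of] <;> group)
  (by intro i; fin_cases i <;> simp [FreeGroup.lift_apply_of] <;> group)

def autLM : MulAut F2 := mkAut ![(of 1)⁻¹ * of 0, of 1] ![of 1 * of 0, of 1]
  (by intro i; fin_cases i <;> simp [FreeGroup.lift_apply_of] <;> group)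
  (by intro i; fin_cases i <;> simp [FreeGroup.lift_apply_of] <;> group)

theorem good_autTP : Good autTP := by
  simp only [Good, autTP, mkAut_apply]
  refine ⟨of 0, Or.inl ?_⟩
  simp only [Cc, _root_.map_mul, _root_.map_inv, FreeGroup.lift_apply_of, Matrix.cons_val_zero, Matrix.cons_val_one,
    Matrix.head_cons]
  group

theorem good_autTM : Good autTM := by
  simp only [Good, autTM, mkAut_apply]
  refine ⟨(of 0)⁻¹, Or.inl ?_⟩
  simp only [Cc, _root_.map_mul, _root_.map_inv, FreeGroup.lift_apply_of, Matrix.cons_val_zero, Matrix.cons_val_one,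
    Matrix.head_cons]
  group

theorem good_autSP : Good autSP := by
  simp only [Good, autSP, mkAut_apply]
  refine ⟨1, Or.inl ?_⟩
  simp only [Cc, _root_.map_mul, _root_.map_inv, FreeGroup.lift_apply_of, Matrix.cons_val_zero, Matrix.cons_val_one,
    Matrix.head_cons]
  group

theorem good_autSM : Good autSM := by
  simp only [Good, autSM, mkAut_apply]
  refine ⟨1, Or.inl ?_⟩
  simp only [Cc, _root_.map_mul, _root_.map_inv, FreeGroup.lift_apply_of, Matrix.cons_val_zero, Matrix.cons_val_one,
    Matrix.head_cons]
  group

theorem good_autRP : Good autRP := by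
  simp only [Good, autRP, mkAut_apply]
  refine ⟨1, Or.inl ?_⟩
  simp only [Cc, _root_.map_mul, _root_.map_inv, FreeGroup.lift_apply_of, Matrix.cons_val_zero, Matrix.cons_val_one,
    Matrix.head_cons]
  group

theorem good_autRM : Good autRM := by
  simp only [Good, autRM, mkAut_apply]
  refine ⟨1, Or.inl ?_⟩
  simp only [Cc, _root_.map_mul, _root_.map_inv, FreeGroup.lift_apply_of, Matrix.cons_val_zero, Matrix.cons_val_one,
    Matrix.head_cons]
  group

theorem good_autLP : Good autLP := by
  simp only [Good, autLP, mkAut_apply]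
  refine ⟨of 1, Or.inl ?_⟩
  simp only [Cc, _root_.map_mul, _root_.map_inv, FreeGroup.lift_apply_of, Matrix.cons_val_zero, Matrix.cons_val_one,
    Matrix.head_cons]
  group

theorem good_autLM : Good autLM := by
  simp only [Good, autLM, mkAut_apply]
  refine ⟨(of 1)⁻¹, Or.inl ?_⟩
  simp only [Cc, _root_.map_mul, _root_.map_inv, FreeGroup.lift_apply_of, Matrix.cons_val_zero, Matrix.cons_val_one,
    Matrix.head_cons]
  group

theorem good_conj (g : F2) : Good (MulAut.conj g) := ⟨g, Or.inl rfl⟩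

theorem good_conj_inv (g : F2) : Good ((MulAut.conj g)⁻¹) := by
  rw [← _root_.map_inv MulAut.conj g]
  exact good_conj g⁻¹

theorem good_mul {ρ σ : MulAut F2} (hρ : Good ρ) (hσ : Good σ) : Good (ρ * σ) := by
  obtain ⟨g, hg⟩ := hσ
  obtain ⟨h, hh⟩ := hρ
  rcases hg with hg | hg <;> rcases hh with hh | hh
  · refine ⟨ρ g * h, Or.inl ?_⟩
    rw [MulAut.mul_apply, hg]
    simp only [_root_.map_mul, _root_.map_inv, hh]
    group
  · refine ⟨ρ g * h, Or.inr ?_⟩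
    rw [MulAut.mul_apply, hg]
    simp only [_root_.map_mul, _root_.map_inv, hh]
    group
  · refine ⟨ρ g * h, Or.inr ?_⟩
    rw [MulAut.mul_apply, hg]
    simp only [_root_.map_mul, _root_.map_inv, hh]
    group
  · refine ⟨ρ g * h, Or.inl ?_⟩
    rw [MulAut.mul_apply, hg]
    simp only [_root_.map_mul, _root_.map_inv, hh]
    group

theorem kill (φ : MulAut F2)
    (HB : ∀ ρ : MulAut F2, Good ρ →
      ‖φ (of 0)‖ + ‖φ (of 1)‖ ≤ ‖φ (ρ (of 0))‖ + ‖φ (ρ (of 1))‖)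
    (elem : MulAut F2) (hg : Good elem) (P : F2)
    (hlt : ‖P⁻¹ * φ (elem (of 0)) * P‖ + ‖P⁻¹ * φ (elem (of 1)) * P‖ <
      ‖φ (of 0)‖ + ‖φ (of 1)‖) : False := by
  set γ := φ.symm P with hγ
  set ρ := (MulAut.conj γ)⁻¹ * elem with hρdef
  have hρg : Good ρ := good_mul (good_conj_inv γ) hg
  have happ : ∀ i : Fin 2, φ (ρ (of i)) = P⁻¹ * φ (elem (of i)) * P := by
    intro i
    rw [hρdef, MulAut.mul_apply, ← _root_.map_inv MulAut.conj γ, MulAut.conj_apply]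
    simp only [_root_.map_mul, _root_.map_inv, inv_inv]
    rw [hγ, MulEquiv.apply_symm_apply]
  have hb := HB ρ hρg
  rw [happ 0, happ 1] at hb
  omega

end F2


section Main

theorem eq_inv_of_eq_inv' {G : Type*} [Group G] {a b : G} (h : a = b⁻¹) : b = a⁻¹ := by
  rw [h, inv_inv]

theorem kill_leaf (φ : MulAut F2)
    (HB : ∀ ρ : MulAut F2, Good ρ →
      ‖φ (of 0)‖ + ‖φ (of 1)‖ ≤ ‖φ (ρ (of 0))‖ + ‖φ (ρ (of 1))‖)
    (elem : MulAut F2) (hg : Good elem) (P A B : F2)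
    (h0 : φ (elem (of 0)) = A) (h1 : φ (elem (of 1)) = B)
    (hlt : ‖P⁻¹ * A * P‖ + ‖P⁻¹ * B * P‖ < ‖φ (of 0)‖ + ‖φ (of 1)‖) : False := by
  apply kill φ HB elem hg P
  rw [h0, h1]
  exact hlt

theorem caseB (φ : MulAut F2)
    (HB : ∀ ρ : MulAut F2, Good ρ →
      ‖φ (of 0)‖ + ‖φ (of 1)‖ ≤ ‖φ (ρ (of 0))‖ + ‖φ (ρ (of 1))‖) :
    ∃ w : F2, φ Cc = w * Cc * w⁻¹ ∨ φ Cc = w * Cc⁻¹ * w⁻¹ := by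
  have hx : φ (of 0) ≠ 1 := by
    intro h
    exact FreeGroup.of_ne_one (0 : Fin 2) (φ.injective (by rw [_root_.map_one]; exact h))
  have hy : φ (of 1) ≠ 1 := by
    intro h
    exact FreeGroup.of_ne_one (1 : Fin 2) (φ.injective (by rw [_root_.map_one]; exact h))
  -- elementary images
  have eTP0 : autTP (of 0) = of 0 := by simp [autTP, FreeGroup.lift_apply_of]
  have eTP1 : autTP (of 1) = of 0 * of 1 := by simp [autTP, FreeGroup.lift_apply_of]
  have eTM0 : autTM (of 0) = of 0 := by simp [autTM, FreeGroup.lift_apply_of]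
  have eTM1 : autTM (of 1) = (of 0)⁻¹ * of 1 := by simp [autTM, FreeGroup.lift_apply_of]
  have eSP0 : autSP (of 0) = of 0 := by simp [autSP, FreeGroup.lift_apply_of]
  have eSP1 : autSP (of 1) = of 1 * of 0 := by simp [autSP, FreeGroup.lift_apply_of]
  have eSM0 : autSM (of 0) = of 0 := by simp [autSM, FreeGroup.lift_apply_of]
  have eSM1 : autSM (of 1) = of 1 * (of 0)⁻¹ := by simp [autSM, FreeGroup.lift_apply_of]
  have eRP0 : autRP (of 0) = of 0 * of 1 := by simp [autRP, FreeGroup.lift_apply_of]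
  have eRP1 : autRP (of 1) = of 1 := by simp [autRP, FreeGroup.lift_apply_of]
  have eRM0 : autRM (of 0) = of 0 * (of 1)⁻¹ := by simp [autRM, FreeGroup.lift_apply_of]
  have eRM1 : autRM (of 1) = of 1 := by simp [autRM, FreeGroup.lift_apply_of]
  have eLP0 : autLP (of 0) = of 1 * of 0 := by simp [autLP, FreeGroup.lift_apply_of]
  have eLP1 : autLP (of 1) = of 1 := by simp [autLP, FreeGroup.lift_apply_of]
  have eLM0 : autLM (of 0) = (of 1)⁻¹ * of 0 := by simp [autLM, FreeGroup.lift_apply_of]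
  have eLM1 : autLM (of 1) = of 1 := by simp [autLM, FreeGroup.lift_apply_of]
  -- the eight inequalities
  have ItP := HB autTP good_autTP
  rw [eTP0, eTP1, _root_.map_mul] at ItP
  have ItM := HB autTM good_autTM
  rw [eTM0, eTM1, _root_.map_mul, _root_.map_inv] at ItM
  have IsP := HB autSP good_autSP
  rw [eSP0, eSP1, _root_.map_mul] at IsP
  have IsM := HB autSM good_autSM
  rw [eSM0, eSM1, _root_.map_mul, _root_.map_inv] at IsM
  have IrP := HB autRP good_autRP
  rw [eRP0, eRP1, _root_.map_mul] at IrP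
  have IrM := HB autRM good_autRM
  rw [eRM0, eRM1, _root_.map_mul, _root_.map_inv] at IrM
  have IlP := HB autLP good_autLP
  rw [eLP0, eLP1, _root_.map_mul] at IlP
  have IlM := HB autLM good_autLM
  rw [eLM0, eLM1, _root_.map_mul, _root_.map_inv] at IlM
  have H1 := H1_of (φ (of 0)) (φ (of 1)) ItP ItM IsP IsM IrP IrM IlP IlM
  -- the kill hypothesis
  have HK : ∀ X Y P T z : F2,
      ((X = φ (of 0) ∨ X = (φ (of 0))⁻¹) ∧ (Y = φ (of 1) ∨ Y = (φ (of 1))⁻¹)) ∨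
        ((X = φ (of 1) ∨ X = (φ (of 1))⁻¹) ∧ (Y = φ (of 0) ∨ Y = (φ (of 0))⁻¹)) →
      X = P * T → ‖P‖ = ‖T‖ → 1 ≤ ‖P‖ → ‖X‖ = 2 * ‖P‖ →
      X * Y = P * z * P⁻¹ → ‖z‖ + 2 * ‖P‖ = ‖Y‖ → False := by
    intro X Y P T z horient hXPT hPTn hP1 hXn hconj hzn
    have hTP : ‖T * P‖ ≤ 2 * ‖P‖ := by
      have := norm_mul_le T P
      omega
    rcases horient with ⟨hX | hX, hY | hY⟩ | ⟨hX | hX, hY | hY⟩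
    · -- X = x, Y = y : autTP
      have eA : P⁻¹ * φ (of 0) * P = T * P := by rw [← hX, hXPT]; group
      have eB : P⁻¹ * (φ (of 0) * φ (of 1)) * P = z := by
        rw [← hX, ← hY, hconj]; group
      refine kill_leaf φ HB autTP good_autTP P _ _ (congrArg φ eTP0) (by rw [eTP1, _root_.map_mul]) ?_
      rw [eA, eB]
      have hxn : ‖φ (of 0)‖ = 2 * ‖P‖ := by rw [← hX]; exact hXn
      have hyn : ‖z‖ + 2 * ‖P‖ = ‖φ (of 1)‖ := by rw [← hY]; exact hzn
      omega
    · -- X = x, Y = y⁻¹ : autSM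
      have eA : P⁻¹ * φ (of 0) * P = T * P := by rw [← hX, hXPT]; group
      have eB : P⁻¹ * (φ (of 1) * (φ (of 0))⁻¹) * P = z⁻¹ := by
        have h : φ (of 1) * (φ (of 0))⁻¹ = (X * Y)⁻¹ := by rw [hX, hY]; group
        rw [h, hconj]; group
      refine kill_leaf φ HB autSM good_autSM P _ _ (congrArg φ eSM0)
        (by rw [eSM1, _root_.map_mul, _root_.map_inv]) ?_
      rw [eA, eB, norm_inv_eq]
      have hxn : ‖φ (of 0)‖ = 2 * ‖P‖ := by rw [← hX]; exact hXn
      have hyn : ‖z‖ + 2 * ‖P‖ = ‖φ (of 1)‖ := by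
        have : ‖Y‖ = ‖φ (of 1)‖ := by rw [hY, norm_inv_eq]
        omega
      omega
    · -- X = x⁻¹, Y = y : autTM
      have eA : P⁻¹ * φ (of 0) * P = (T * P)⁻¹ := by
        have h : φ (of 0) = X⁻¹ := by rw [hX, inv_inv]
        rw [h, hXPT]; group
      have eB : P⁻¹ * ((φ (of 0))⁻¹ * φ (of 1)) * P = z := by
        have h : (φ (of 0))⁻¹ * φ (of 1) = X * Y := by rw [hX, hY]
        rw [h, hconj]; group
      refine kill_leaf φ HB autTM good_autTM P _ _ (congrArg φ eTM0)
        (by rw [eTM1, _root_.map_mul, _root_.map_inv]) ?_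
      rw [eA, eB, norm_inv_eq]
      have hxn : ‖φ (of 0)‖ = 2 * ‖P‖ := by
        rw [← norm_inv_eq (x := φ (of 0)), ← hX]; exact hXn
      have hyn : ‖z‖ + 2 * ‖P‖ = ‖φ (of 1)‖ := by rw [← hY]; exact hzn
      omega
    · -- X = x⁻¹, Y = y⁻¹ : autSP
      have eA : P⁻¹ * φ (of 0) * P = (T * P)⁻¹ := by
        have h : φ (of 0) = X⁻¹ := by rw [hX, inv_inv]
        rw [h, hXPT]; group
      have eB : P⁻¹ * (φ (of 1) * φ (of 0)) * P = z⁻¹ := by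
        have h : φ (of 1) * φ (of 0) = (X * Y)⁻¹ := by rw [hX, hY]; group
        rw [h, hconj]; group
      refine kill_leaf φ HB autSP good_autSP P _ _ (congrArg φ eSP0)
        (by rw [eSP1, _root_.map_mul]) ?_
      rw [eA, eB, norm_inv_eq, norm_inv_eq]
      have hxn : ‖φ (of 0)‖ = 2 * ‖P‖ := by
        rw [← norm_inv_eq (x := φ (of 0)), ← hX]; exact hXn
      have hyn : ‖z‖ + 2 * ‖P‖ = ‖φ (of 1)‖ := by
        have : ‖Y‖ = ‖φ (of 1)‖ := by rw [hY, norm_inv_eq]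
        omega
      omega
    · -- X = y, Y = x : autLP
      have eA : P⁻¹ * (φ (of 1) * φ (of 0)) * P = z := by
        rw [← hX, ← hY, hconj]; group
      have eB : P⁻¹ * φ (of 1) * P = T * P := by rw [← hX, hXPT]; group
      refine kill_leaf φ HB autLP good_autLP P _ _
        (by rw [eLP0, _root_.map_mul]) (congrArg φ eLP1) ?_
      rw [eA, eB]
      have hxn : ‖φ (of 1)‖ = 2 * ‖P‖ := by rw [← hX]; exact hXn
      have hyn : ‖z‖ + 2 * ‖P‖ = ‖φ (of 0)‖ := by rw [← hY]; exact hzn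
      omega
    · -- X = y, Y = x⁻¹ : autRM
      have eA : P⁻¹ * (φ (of 0) * (φ (of 1))⁻¹) * P = z⁻¹ := by
        have h : φ (of 0) * (φ (of 1))⁻¹ = (X * Y)⁻¹ := by rw [hX, hY]; group
        rw [h, hconj]; group
      have eB : P⁻¹ * φ (of 1) * P = T * P := by rw [← hX, hXPT]; group
      refine kill_leaf φ HB autRM good_autRM P _ _
        (by rw [eRM0, _root_.map_mul, _root_.map_inv]) (congrArg φ eRM1) ?_
      rw [eA, eB, norm_inv_eq]
      have hxn : ‖φ (of 1)‖ = 2 * ‖P‖ := by rw [← hX]; exact hXn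
      have hyn : ‖z‖ + 2 * ‖P‖ = ‖φ (of 0)‖ := by
        have : ‖Y‖ = ‖φ (of 0)‖ := by rw [hY, norm_inv_eq]
        omega
      omega
    · -- X = y⁻¹, Y = x : autLM
      have eA : P⁻¹ * ((φ (of 1))⁻¹ * φ (of 0)) * P = z := by
        have h : (φ (of 1))⁻¹ * φ (of 0) = X * Y := by rw [hX, hY]
        rw [h, hconj]; group
      have eB : P⁻¹ * φ (of 1) * P = (T * P)⁻¹ := by
        have h : φ (of 1) = X⁻¹ := by rw [hX, inv_inv]
        rw [h, hXPT]; group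
      refine kill_leaf φ HB autLM good_autLM P _ _
        (by rw [eLM0, _root_.map_mul, _root_.map_inv]) (congrArg φ eLM1) ?_
      rw [eA, eB, norm_inv_eq]
      have hxn : ‖φ (of 1)‖ = 2 * ‖P‖ := by
        rw [← norm_inv_eq (x := φ (of 1)), ← hX]; exact hXn
      have hyn : ‖z‖ + 2 * ‖P‖ = ‖φ (of 0)‖ := by rw [← hY]; exact hzn
      omega
    · -- X = y⁻¹, Y = x⁻¹ : autRP
      have eA : P⁻¹ * (φ (of 0) * φ (of 1)) * P = z⁻¹ := by
        have h : φ (of 0) * φ (of 1) = (X * Y)⁻¹ := by rw [hX, hY]; group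
        rw [h, hconj]; group
      have eB : P⁻¹ * φ (of 1) * P = (T * P)⁻¹ := by
        have h : φ (of 1) = X⁻¹ := by rw [hX, inv_inv]
        rw [h, hXPT]; group
      refine kill_leaf φ HB autRP good_autRP P _ _
        (by rw [eRP0, _root_.map_mul]) (congrArg φ eRP1) ?_
      rw [eA, eB, norm_inv_eq, norm_inv_eq]
      have hxn : ‖φ (of 1)‖ = 2 * ‖P‖ := by
        rw [← norm_inv_eq (x := φ (of 1)), ← hX]; exact hXn
      have hyn : ‖z‖ + 2 * ‖P‖ = ‖φ (of 0)‖ := by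
        have : ‖Y‖ = ‖φ (of 0)‖ := by rw [hY, norm_inv_eq]
        omega
      omega
  have H2 := star_of (φ (of 0)) (φ (of 1)) hx hy H1 HK
  -- counting setup
  have hmkinv : ∀ i : Fin 2, mk [(i, false)] = (of i)⁻¹ := by
    intro i
    rw [show (of i : F2) = mk [(i, true)] from rfl, inv_mk]
    simp [invRev]
  have hfmem : ∀ ℓ : Fin 2 × Bool, φ (mk [ℓ]) ∈
      ({φ (of 0), (φ (of 0))⁻¹, φ (of 1), (φ (of 1))⁻¹} : Set F2) := by
    rintro ⟨i, b⟩
    have hi : i = 0 ∨ i = 1 := by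
      fin_cases i
      · exact Or.inl rfl
      · exact Or.inr rfl
    rcases hi with rfl | rfl <;> cases b
    · rw [hmkinv 0, _root_.map_inv]
      right; left; rfl
    · left; rfl
    · rw [hmkinv 1, _root_.map_inv]
      right; right; right; rfl
    · right; right; left; rfl
  have hne1 : ∀ u ∈ ({φ (of 0), (φ (of 0))⁻¹, φ (of 1), (φ (of 1))⁻¹} : Set F2), u ≠ 1 := by
    intro u hu
    simp only [Set.mem_insert_iff, Set.mem_singleton_iff] at hu
    rcases hu with rfl | rfl | rfl | rfl
    · exact hx
    · simpa using hx
    · exact hy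
    · simpa using hy
  have hf2 : ∀ ℓ ℓ' : Fin 2 × Bool, ¬(ℓ.1 = ℓ'.1 ∧ ℓ.2 = !ℓ'.2) →
      φ (mk [ℓ]) * φ (mk [ℓ']) ≠ 1 := by
    intro ℓ ℓ' hc h
    rw [← _root_.map_mul, mul_mk] at h
    have h2 : mk [ℓ, ℓ'] = 1 := φ.injective (by rw [_root_.map_one]; exact h)
    have h3 : reduce [ℓ, ℓ'] = [] := by
      rw [← toWord_mk, h2, toWord_one]
    rw [reduce_cons' ℓ ℓ' (reduce_singleton ℓ'), if_neg hc] at h3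
    simp at h3
  have hφmk : ∀ W : List (Fin 2 × Bool),
      (W.map (fun ℓ => φ (mk [ℓ]))).prod = φ (mk W) := by
    intro W
    induction W with
    | nil => simp [show (mk [] : F2) = 1 from rfl]
    | cons ℓ W ih =>
      rw [List.map_cons, List.prod_cons, ih, ← _root_.map_mul, mul_mk]
      rfl
  have key : ∀ g : F2, ‖g‖ ≤ ‖φ g‖ := by
    intro g
    have h1 := counting (fun ℓ => φ (mk [ℓ]))
      ({φ (of 0), (φ (of 0))⁻¹, φ (of 1), (φ (of 1))⁻¹} : Set F2)
      hfmem hne1 hf2 H1 H2 g.toWord (isRed_toWord g)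
    rw [hφmk g.toWord, mk_toWord] at h1
    exact h1
  -- conclude the generators go to generators
  have hlen0 : ‖φ.symm (of 0)‖ = 1 := by
    have h1 := key (φ.symm (of 0))
    rw [MulEquiv.apply_symm_apply] at h1
    have h2 : ‖(of 0 : F2)‖ = 1 := norm_of 0
    have h3 : φ.symm (of 0) ≠ 1 := by
      intro h
      exact FreeGroup.of_ne_one (0 : Fin 2) (by
        rw [← MulEquiv.apply_symm_apply φ (of 0), h, _root_.map_one])
    have h4 : ‖φ.symm (of 0)‖ ≠ 0 := fun h => h3 (FreeGroup.norm_eq_zero.1 h)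
    have h5 : ‖φ.symm (of 0)‖ ≤ 1 := by omega
    omega
  have hlen1 : ‖φ.symm (of 1)‖ = 1 := by
    have h1 := key (φ.symm (of 1))
    rw [MulEquiv.apply_symm_apply] at h1
    have h2 : ‖(of 1 : F2)‖ = 1 := norm_of 1
    have h3 : φ.symm (of 1) ≠ 1 := by
      intro h
      exact FreeGroup.of_ne_one (1 : Fin 2) (by
        rw [← MulEquiv.apply_symm_apply φ (of 1), h, _root_.map_one])
    have h4 : ‖φ.symm (of 1)‖ ≠ 0 := fun h => h3 (FreeGroup.norm_eq_zero.1 h)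
    have h5 : ‖φ.symm (of 1)‖ ≤ 1 := by omega
    omega
  obtain ⟨ℓ₀, hℓ₀⟩ := List.length_eq_one_iff.1
    (show (φ.symm (of 0)).toWord.length = 1 from hlen0)
  obtain ⟨ℓ₁, hℓ₁⟩ := List.length_eq_one_iff.1
    (show (φ.symm (of 1)).toWord.length = 1 from hlen1)
  have h0 : φ (mk [ℓ₀]) = of 0 := by
    rw [← hℓ₀, mk_toWord, MulEquiv.apply_symm_apply]
  have h1 : φ (mk [ℓ₁]) = of 1 := by
    rw [← hℓ₁, mk_toWord, MulEquiv.apply_symm_apply]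
  have h0m := hfmem ℓ₀
  have h1m := hfmem ℓ₁
  rw [h0] at h0m
  rw [h1] at h1m
  simp only [Set.mem_insert_iff, Set.mem_singleton_iff] at h0m h1m
  have hd1 : (of 0 : F2) ≠ of 1 := by
    intro h
    have := congrArg toWord h
    simp [toWord_of] at this
  have hd2 : (of 0 : F2) ≠ (of 1)⁻¹ := by
    intro h
    have := congrArg toWord h
    simp [toWord_of, toWord_inv, invRev] at this
  have hφC : φ Cc = φ (of 0) * φ (of 1) * (φ (of 0))⁻¹ * (φ (of 1))⁻¹ := by
    simp [Cc, _root_.map_mul, _root_.map_inv]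
  rcases h0m with h0x | h0x | h0x | h0x <;> rcases h1m with h1x | h1x | h1x | h1x
  · -- (x, x)
    exact absurd (h0x.trans h1x.symm) hd1
  · -- (x, x⁻¹)
    exact absurd (h0x.trans (eq_inv_of_eq_inv' h1x)) hd2
  · -- (x, y)
    have e0 : φ (of 0) = of 0 := h0x.symm
    have e1 : φ (of 1) = of 1 := h1x.symm
    refine ⟨1, Or.inl ?_⟩
    rw [hφC, e0, e1]
    simp only [Cc]
    group
  · -- (x, y⁻¹)
    have e0 : φ (of 0) = of 0 := h0x.symm
    have e1 : φ (of 1) = (of 1)⁻¹ := eq_inv_of_eq_inv' h1x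
    refine ⟨(of 1)⁻¹, Or.inr ?_⟩
    rw [hφC, e0, e1]
    simp only [Cc]
    group
  · -- (x⁻¹, x)
    exact absurd (eq_inv_of_eq_inv' (h1x.trans (eq_inv_of_eq_inv' h0x))) hd2
  · -- (x⁻¹, x⁻¹)
    exact absurd (h0x.trans h1x.symm) hd1
  · -- (x⁻¹, y)
    have e0 : φ (of 0) = (of 0)⁻¹ := eq_inv_of_eq_inv' h0x
    have e1 : φ (of 1) = of 1 := h1x.symm
    refine ⟨(of 0)⁻¹, Or.inr ?_⟩
    rw [hφC, e0, e1]
    simp only [Cc]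
    group
  · -- (x⁻¹, y⁻¹)
    have e0 : φ (of 0) = (of 0)⁻¹ := eq_inv_of_eq_inv' h0x
    have e1 : φ (of 1) = (of 1)⁻¹ := eq_inv_of_eq_inv' h1x
    refine ⟨(of 0 * of 1)⁻¹, Or.inl ?_⟩
    rw [hφC, e0, e1]
    simp only [Cc]
    group
  · -- (y, x)
    have e0 : φ (of 0) = of 1 := h1x.symm
    have e1 : φ (of 1) = of 0 := h0x.symm
    refine ⟨1, Or.inr ?_⟩
    rw [hφC, e0, e1]
    simp only [Cc]
    group
  · -- (y, x⁻¹)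
    have e0 : φ (of 0) = (of 1)⁻¹ := eq_inv_of_eq_inv' h1x
    have e1 : φ (of 1) = of 0 := h0x.symm
    refine ⟨(of 1)⁻¹, Or.inl ?_⟩
    rw [hφC, e0, e1]
    simp only [Cc]
    group
  · -- (y, y)
    exact absurd (h0x.trans h1x.symm) hd1
  · -- (y, y⁻¹)
    exact absurd (h0x.trans (eq_inv_of_eq_inv' h1x)) hd2
  · -- (y⁻¹, x)
    have e0 : φ (of 0) = of 1 := h1x.symm
    have e1 : φ (of 1) = (of 0)⁻¹ := eq_inv_of_eq_inv' h0x
    refine ⟨(of 0)⁻¹, Or.inl ?_⟩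
    rw [hφC, e0, e1]
    simp only [Cc]
    group
  · -- (y⁻¹, x⁻¹)
    have e0 : φ (of 0) = (of 1)⁻¹ := eq_inv_of_eq_inv' h1x
    have e1 : φ (of 1) = (of 0)⁻¹ := eq_inv_of_eq_inv' h0x
    refine ⟨(of 0 * of 1)⁻¹, Or.inr ?_⟩
    rw [hφC, e0, e1]
    simp only [Cc]
    group
  · -- (y⁻¹, y)
    exact absurd (eq_inv_of_eq_inv' (h1x.trans (eq_inv_of_eq_inv' h0x))) hd2
  · -- (y⁻¹, y⁻¹)
    exact absurd (h0x.trans h1x.symm) hd1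

theorem transfer {φ ρ : MulAut F2} (hρ : Good ρ)
    (h2 : ∃ w : F2, (φ * ρ) Cc = w * Cc * w⁻¹ ∨ (φ * ρ) Cc = w * Cc⁻¹ * w⁻¹) :
    ∃ w : F2, φ Cc = w * Cc * w⁻¹ ∨ φ Cc = w * Cc⁻¹ * w⁻¹ := by
  obtain ⟨g, hg⟩ := hρ
  obtain ⟨w, hw⟩ := h2
  rcases hg with hg | hg <;> rcases hw with hw | hw
  · refine ⟨(φ g)⁻¹ * w, Or.inl ?_⟩
    rw [MulAut.mul_apply, hg] at hw
    simp only [_root_.map_mul, _root_.map_inv] at hw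
    have h4 : φ Cc = (φ g)⁻¹ * (w * Cc * w⁻¹) * φ g := by
      rw [← hw]; group
    rw [h4]; group
  · refine ⟨(φ g)⁻¹ * w, Or.inr ?_⟩
    rw [MulAut.mul_apply, hg] at hw
    simp only [_root_.map_mul, _root_.map_inv] at hw
    have h4 : φ Cc = (φ g)⁻¹ * (w * Cc⁻¹ * w⁻¹) * φ g := by
      rw [← hw]; group
    rw [h4]; group
  · refine ⟨(φ g)⁻¹ * w, Or.inr ?_⟩
    rw [MulAut.mul_apply, hg] at hw
    simp only [_root_.map_mul, _root_.map_inv] at hw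
    have h4 : (φ Cc)⁻¹ = (φ g)⁻¹ * (w * Cc * w⁻¹) * φ g := by
      rw [← hw]; group
    have h5 : φ Cc = ((φ g)⁻¹ * (w * Cc * w⁻¹) * φ g)⁻¹ := by
      rw [← h4, inv_inv]
    rw [h5]; group
  · refine ⟨(φ g)⁻¹ * w, Or.inl ?_⟩
    rw [MulAut.mul_apply, hg] at hw
    simp only [_root_.map_mul, _root_.map_inv] at hw
    have h4 : (φ Cc)⁻¹ = (φ g)⁻¹ * (w * Cc⁻¹ * w⁻¹) * φ g := by
      rw [← hw]; group
    have h5 : φ Cc = ((φ g)⁻¹ * (w * Cc⁻¹ * w⁻¹) * φ g)⁻¹ := by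
      rw [← h4, inv_inv]
    rw [h5]; group

theorem main_aux : ∀ (n : ℕ) (φ : MulAut F2), ‖φ (of 0)‖ + ‖φ (of 1)‖ = n →
    ∃ w : F2, φ Cc = w * Cc * w⁻¹ ∨ φ Cc = w * Cc⁻¹ * w⁻¹ := by
  intro n
  induction n using Nat.strong_induction_on with
  | _ n ih =>
    intro φ hn
    by_cases hA : ∃ ρ : MulAut F2, Good ρ ∧ ‖φ (ρ (of 0))‖ + ‖φ (ρ (of 1))‖ < n
    · obtain ⟨ρ, hρ, hlt⟩ := hA
      have hres := ih _ hlt (φ * ρ) (by rw [MulAut.mul_apply, MulAut.mul_apply])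
      exact transfer hρ hres
    · push_neg at hA
      apply caseB φ
      intro ρ hρ
      rw [hn]
      exact hA ρ hρ

end Main

end NielsenAux

/-- (Nielsen) Every automorphism of the free group `F₂ = ⟨a,b⟩` sends the
commutator `[a,b] = a·b·a⁻¹·b⁻¹` to a conjugate of itself or of its inverse
`[b,a]`. -/
theorem stmt12 (φ : MulAut (FreeGroup (Fin 2))) :
    ∃ w : FreeGroup (Fin 2),
      φ (FreeGroup.of 0 * FreeGroup.of 1 * (FreeGroup.of 0)⁻¹ * (FreeGroup.of 1)⁻¹) =
        w * (FreeGroup.of 0 * FreeGroup.of 1 * (FreeGroup.of 0)⁻¹ * (FreeGroup.of 1)⁻¹) * w⁻¹ ∨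
      φ (FreeGroup.of 0 * FreeGroup.of 1 * (FreeGroup.of 0)⁻¹ * (FreeGroup.of 1)⁻¹) =
        w * (FreeGroup.of 1 * FreeGroup.of 0 * (FreeGroup.of 1)⁻¹ * (FreeGroup.of 0)⁻¹) * w⁻¹ := by
  obtain ⟨w, h | h⟩ := NielsenAux.main_aux (FreeGroup.norm (φ (FreeGroup.of 0)) +
      FreeGroup.norm (φ (FreeGroup.of 1))) φ rfl
  · exact ⟨w, Or.inl h⟩
  · refine ⟨w, Or.inr ?_⟩
    have hC : (NielsenAux.Cc)⁻¹ =
        FreeGroup.of 1 * FreeGroup.of 0 * (FreeGroup.of 1)⁻¹ * (FreeGroup.of 0)⁻¹ := by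
      simp only [NielsenAux.Cc]
      group
    exact h.trans (by rw [hC])
end

section
/- Let F₂ be the free group on two generators a, b, let ρ : F₂ → SL(2,ℝ) be a homomorphism, and let φ be an automorphism of F₂. Then Tr( ρ(φ(a))·ρ(φ(b))·ρ(φ(a))⁻¹·ρ(φ(b))⁻¹ ) = Tr( ρ(a)·ρ(b)·ρ(a)⁻¹·ρ(b)⁻¹ ). (The trace of the commutator, equivalently the value κ(x,y,z) = x² + y² + z² − xyz − 2 of the character, is invariant under every change of free basis.) -/
/-- The trace of an element of SL(2,ℝ), viewed as a 2×2 real matrix. -/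
def trSL (g : Matrix.SpecialLinearGroup (Fin 2) ℝ) : ℝ :=
  Matrix.trace (g : Matrix (Fin 2) (Fin 2) ℝ)


namespace Nielsen

abbrev Letter := Fin 2 × Bool
abbrev Word := List Letter
abbrev F2 := FreeGroup (Fin 2)

open FreeGroup List

/-- non-cancelling adjacency -/
def NC (p q : Letter) : Prop := ¬(p.1 = q.1 ∧ p.2 = !q.2)

def Reduced (L : Word) : Prop := List.Chain' NC L

theorem reduced_nil : Reduced [] := List.isChain_nil

theorem reduced_singleton (p : Letter) : Reduced [p] := List.isChain_singleton p

theorem Reduced.reduce_eq {L : Word} (h : Reduced L) : FreeGroup.reduce L = L := by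
  induction L with
  | nil => rfl
  | cons p L ih =>
    have ht : Reduced L := h.tail
    rw [FreeGroup.reduce.cons, ih ht]
    cases L with
    | nil => rfl
    | cons q M =>
      have : NC p q := (List.isChain_cons_cons.1 h).1
      simp only [NC] at this
      simp [this]

theorem reduced_reduce (L : Word) : Reduced (FreeGroup.reduce L) := by
  induction L with
  | nil => exact reduced_nil
  | cons p L ih =>
    rw [FreeGroup.reduce.cons]
    rcases hr : FreeGroup.reduce L with _ | ⟨q, M⟩
    · exact reduced_singleton p
    · rw [hr] at ih
      by_cases hc : p.1 = q.1 ∧ p.2 = !q.2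
      · simp only [if_pos hc]
        exact ih.tail
      · simp only [if_neg hc]
        exact List.isChain_cons_cons.2 ⟨hc, ih⟩

theorem reduced_toWord (g : F2) : Reduced (toWord g) := by
  rcases g with ⟨L⟩
  rw [quot_mk_eq_mk, toWord_mk]
  exact reduced_reduce L

theorem toWord_mk_reduced {L : Word} (h : Reduced L) : (mk L).toWord = L := by
  rw [toWord_mk, h.reduce_eq]

theorem norm_mk_reduced {L : Word} (h : Reduced L) : (mk L).norm = L.length := by
  rw [FreeGroup.norm, toWord_mk_reduced h]

theorem Reduced.append_left {A B : Word} (h : Reduced (A ++ B)) : Reduced A :=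
  (List.isChain_append.1 h).1

theorem Reduced.append_right {A B : Word} (h : Reduced (A ++ B)) : Reduced B :=
  (List.isChain_append.1 h).2.1

theorem invRev_concat (C : Word) (p : Letter) :
    invRev (C ++ [p]) = (p.1, !p.2) :: invRev C := by
  simp [invRev]

theorem mk_single_inv (p : Letter) : mk [((p.1 : Fin 2), !p.2)] = (mk [p])⁻¹ := by
  rw [inv_mk]; rfl

/-- Key cancellation decomposition for the product of two reduced words. -/
theorem exists_cancel : ∀ (V U : Word), Reduced U → Reduced V →
    ∃ A B C : Word, U = A ++ C ∧ V = invRev C ++ B ∧ Reduced (A ++ B) ∧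
      mk U * mk V = mk (A ++ B) := by
  intro V
  induction V with
  | nil =>
    intro U hU _
    exact ⟨U, [], [], by simp, by simp [invRev], by simpa using hU, by simp [one_eq_mk.symm]⟩
  | cons q V' ih =>
    intro U hU hV
    rcases U.eq_nil_or_concat' with rfl | ⟨U', p, rfl⟩
    · exact ⟨[], q :: V', [], by simp, by simp [invRev], by simpa using hV,
        by simp [one_eq_mk.symm]⟩
    by_cases hc : q = (p.1, !p.2)
    · have hU' : Reduced U' := hU.append_left
      have hV' : Reduced V' := hV.tail
      obtain ⟨A, B, C, e1, e2, hred, hmul⟩ := ih U' hU' hV'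
      refine ⟨A, B, C ++ [p], by rw [e1, List.append_assoc], ?_, hred, ?_⟩
      · rw [invRev_concat, ← hc, List.cons_append, ← e2]
      · have h1 : mk (U' ++ [p]) = mk U' * mk [p] := (mul_mk).symm
        have h2 : mk (q :: V') = mk [q] * mk V' := by
          rw [mul_mk]; rfl
        have h3 : mk [q] = (mk [p])⁻¹ := by rw [hc]; exact mk_single_inv p
        rw [h1, h2, h3, mul_assoc, ← mul_assoc (mk [p]), mul_inv_cancel, one_mul, hmul]
    · refine ⟨U' ++ [p], q :: V', [], by simp, by simp [invRev], ?_, mul_mk⟩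
      refine List.isChain_append.2 ⟨hU, hV, ?_⟩
      intro x hx y hy
      simp only [List.getLast?_concat, Option.mem_some_iff] at hx
      simp only [List.head?_cons, Option.mem_some_iff] at hy
      subst hx; subst hy
      rintro ⟨h1, h2⟩
      exact hc (by refine Prod.ext h1.symm ?_; rw [h2, Bool.not_not])

end Nielsen

namespace Nielsen
open FreeGroup List

theorem norm_sq_gt_aux : ∀ (n : ℕ) (x : F2), x ≠ 1 → x.norm ≤ n → x.norm < (x * x).norm := by
  intro n
  induction n with
  | zero =>
    intro x hx hn
    exact absurd (FreeGroup.norm_eq_zero.1 (Nat.le_zero.1 hn)) hx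
  | succ n IH =>
    intro x hx hn
    have hL : Reduced x.toWord := reduced_toWord x
    have hxL : x = mk x.toWord := (mk_toWord).symm
    rcases hE : x.toWord with _ | ⟨p, M'⟩
    · exact absurd (FreeGroup.toWord_eq_nil_iff.1 hE) hx
    rcases M'.eq_nil_or_concat' with rfl | ⟨M, r, rfl⟩
    · -- single letter
      have hx2 : x * x = mk ([p] ++ [p]) := by rw [hxL, hE, mul_mk]
      have hred : Reduced ([p] ++ [p]) := by
        refine List.isChain_cons_cons.2 ⟨?_, reduced_singleton p⟩
        rintro ⟨-, h2⟩; exact Bool.not_ne_self p.2 h2.symm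
      have : (x * x).norm = 2 := by rw [hx2, norm_mk_reduced hred]; rfl
      rw [this, FreeGroup.norm, hE]; simp
    · -- x = p :: M ++ [r]
      rw [hE] at hL hxL
      rw [FreeGroup.norm, hE]
      by_cases hb : r.1 = p.1 ∧ r.2 = !p.2
      · -- cancelling: x is a conjugate
        have hrEq : r = (p.1, !p.2) := Prod.ext hb.1 hb.2
        have hM : M ≠ [] := by
          rintro rfl
          have := (List.isChain_cons_cons.1 hL).1
          exact this ⟨hb.1.symm, by rw [hb.2, Bool.not_not]⟩
        have hMred : Reduced M := hL.infix ⟨[p], [r], by simp⟩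
        have hm1 : mk M ≠ 1 := by
          intro h
          have := norm_mk_reduced hMred
          rw [h, FreeGroup.norm_one] at this
          exact hM (List.length_eq_zero_iff.1 this.symm)
        have hmn : (mk M).norm ≤ n := by
          have h1 : x.norm = M.length + 2 := by rw [FreeGroup.norm, hE]; simp
          have := norm_mk_reduced hMred
          omega
        have hIH := IH (mk M) hm1 hmn
        obtain ⟨A, B, C, e1, e2, hred, hmul⟩ := exists_cancel M M hMred hMred
        have lA : A.length + C.length = M.length := by rw [← List.length_append, ← e1]
        have lB : C.length + B.length = M.length := by
          rw [← invRev_length (L₁ := C), ← List.length_append, ← e2]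
        have lAB : (mk M * mk M).norm = A.length + B.length := by
          rw [hmul, norm_mk_reduced hred, List.length_append]
        have hMlen : (mk M).norm = M.length := norm_mk_reduced hMred
        have key : M.length < A.length + B.length := by
          rw [hMlen, lAB] at hIH; exact hIH
        have hAne : A ≠ [] := by
          intro h; subst h; simp only [List.length_nil] at lA key; omega
        have hBne : B ≠ [] := by
          intro h; subst h; simp only [List.length_nil] at lB key; omega
        -- junction facts
        have hpM : ∀ y ∈ M.head?, NC p y := by
          intro y hy
          have := (List.isChain_cons.1 hL).1
          exact this y (by rw [List.head?_append_of_ne_nil _ hM]; exact hy)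
        have hMr : ∀ z ∈ M.getLast?, NC z r := by
          intro z hz
          have h2 := (List.isChain_cons.1 hL).2
          have h3 := (List.isChain_append.1 h2).2.2
          exact h3 z hz r rfl
        -- the word of x*x
        have hx2 : x * x = mk ([p] ++ (A ++ B) ++ [r]) := by
          have hxe : x = mk [p] * mk M * mk [r] := by
            rw [hxL, mul_mk, mul_mk]; simp
          have hr' : mk [r] = (mk [p])⁻¹ := by rw [hrEq]; exact mk_single_inv p
          have h4 : x * x = mk [p] * (mk M * mk M) * mk [r] := by
            rw [hxe, hr']; group
          rw [h4, hmul, mul_mk, mul_mk]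
        have hredx2 : Reduced ([p] ++ (A ++ B) ++ [r]) := by
          refine List.isChain_append.2 ⟨?_, reduced_singleton r, ?_⟩
          · refine List.isChain_append.2 ⟨reduced_singleton p, hred, ?_⟩
            intro u hu y hy
            simp only [List.getLast?_singleton, Option.mem_some_iff] at hu
            subst hu
            apply hpM
            rw [List.head?_append_of_ne_nil _ hAne] at hy
            rw [e1, List.head?_append_of_ne_nil _ hAne]
            exact hy
          · intro z hz u hu
            simp only [List.head?_cons, Option.mem_some_iff] at hu
            subst hu
            apply hMr
            rw [← List.append_assoc, List.getLast?_append_of_ne_nil _ hBne] at hz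
            rw [e2, List.getLast?_append_of_ne_nil _ hBne]
            exact hz
        rw [hx2, norm_mk_reduced hredx2]
        have hlen : (p :: (M ++ [r])).length = M.length + 2 := by simp
        simp only [List.length_append, List.length_singleton]
        omega
      · -- non-cancelling: x*x reduced concatenation
        have hx2 : x * x = mk ((p :: (M ++ [r])) ++ (p :: (M ++ [r]))) := by
          rw [hxL, mul_mk]
        have hredx2 : Reduced ((p :: (M ++ [r])) ++ (p :: (M ++ [r]))) := by
          refine List.isChain_append.2 ⟨hL, hL, ?_⟩
          intro z hz u hu
          simp only [List.head?_cons, Option.mem_some_iff] at hu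
          subst hu
          have : z = r := by
            simp only [List.getLast?_cons, List.getLast?_append, List.getLast?_singleton] at hz
            simp_all
          subst this
          exact hb
        rw [hx2, norm_mk_reduced hredx2]
        simp

theorem norm_sq_gt (x : F2) (hx : x ≠ 1) : x.norm < (x * x).norm :=
  norm_sq_gt_aux x.norm x hx le_rfl

theorem sq_ne_one (x : F2) (hx : x ≠ 1) : x * x ≠ 1 := by
  intro h
  have := norm_sq_gt x hx
  rw [h, FreeGroup.norm_one] at this
  omega

end Nielsen

namespace Nielsen
open FreeGroup List

/-- the element of `F2` represented by a single letter, under `lift f` -/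
def lv (f : Fin 2 → F2) (p : Letter) : F2 := if p.2 then f p.1 else (f p.1)⁻¹

theorem lift_mk_single (f : Fin 2 → F2) (p : Letter) :
    FreeGroup.lift f (mk [p]) = lv f p := by
  rcases p with ⟨i, b⟩
  cases b
  · have h : mk [((i : Fin 2), false)] = (of i)⁻¹ := by
      have := mk_single_inv ((i, true) : Letter)
      exact this
    rw [h]
    simp [lv]
  · show FreeGroup.lift f (of i) = _
    rw [FreeGroup.lift_apply_of]; rfl
theorem getLast?_drop_of_lt {A : Word} {d : ℕ} (h : d < A.length) :
    (A.drop d).getLast? = A.getLast? := by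
  conv_rhs => rw [← List.take_append_drop d A]
  rw [List.getLast?_append_of_ne_nil]
  intro hh
  have := List.length_drop (i := d) (l := A)
  rw [hh] at this; simp at this; omega

theorem CL_inv (f : Fin 2 → F2)
    (H1 : ∀ p q : Letter, NC p q → (lv f q).norm ≤ (lv f p * lv f q).norm)
    (H2 : ∀ p q r : Letter, NC p q → NC q r →
      (lv f p).norm + (lv f r).norm + 2 ≤ (lv f p * lv f q).norm + (lv f q * lv f r).norm)
    (Hne : ∀ p, lv f p ≠ 1) :
    ∀ (L : Word) (ℓ : Letter), Reduced (L ++ [ℓ]) →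
    ∃ (P : Word) (d : ℕ),
      (FreeGroup.lift f (mk (L ++ [ℓ]))).toWord = P ++ (lv f ℓ).toWord.drop d ∧
      (∀ u : Letter, NC ℓ u →
        2*d + (lv f u).norm < (lv f ℓ).norm + (lv f ℓ * lv f u).norm) ∧
      L.length + (lv f ℓ).norm ≤ (FreeGroup.lift f (mk (L ++ [ℓ]))).norm + d := by
  intro L
  induction L using List.reverseRecOn with
  | nil =>
    intro ℓ _
    have e : FreeGroup.lift f (mk ([] ++ [ℓ])) = lv f ℓ := by
      rw [List.nil_append, lift_mk_single]
    refine ⟨[], 0, by rw [e]; simp, ?_, by rw [e]; simp⟩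
    intro u hu
    have h1 := H1 ℓ u hu
    have h2 : (lv f ℓ).norm ≠ 0 := fun h => Hne ℓ (FreeGroup.norm_eq_zero.1 h)
    omega
  | append_singleton L'' ℓ' IH =>
    intro ℓ hred
    have hred' : Reduced (L'' ++ [ℓ']) := hred.append_left
    have hNC : NC ℓ' ℓ := by
      have := (List.isChain_append.1 hred).2.2
      exact this ℓ' (by simp [List.getLast?_concat]) ℓ rfl
    obtain ⟨P, d, hW, hd, hlen⟩ := IH ℓ' hred'
    obtain ⟨A, B, C, e1, e2, hAB, hmul⟩ :=
      exists_cancel (lv f ℓ).toWord (lv f ℓ').toWord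
        (reduced_toWord (lv f ℓ')) (reduced_toWord (lv f ℓ))
    have hv12 : lv f ℓ' * lv f ℓ = mk (A ++ B) := by
      rw [← mk_toWord (x := lv f ℓ'), ← mk_toWord (x := lv f ℓ)]; exact hmul
    have lA : A.length + C.length = (lv f ℓ').norm := by
      rw [FreeGroup.norm, e1, List.length_append]
    have lB : C.length + B.length = (lv f ℓ).norm := by
      rw [FreeGroup.norm, e2, List.length_append, invRev_length]
    have lAB : (lv f ℓ' * lv f ℓ).norm = A.length + B.length := by
      rw [hv12, norm_mk_reduced hAB, List.length_append]
    have hdA : d < A.length := by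
      have := hd ℓ hNC
      omega
    have hgw : (FreeGroup.lift f (mk (L'' ++ [ℓ']))).toWord = (P ++ A.drop d) ++ C := by
      rw [hW, e1, List.drop_append_of_le_length (le_of_lt hdA), List.append_assoc]
    have hglen : (FreeGroup.lift f (mk (L'' ++ [ℓ']))).norm
        = P.length + (A.length - d) + C.length := by
      rw [FreeGroup.norm, hgw]
      simp only [List.length_append, List.length_drop]
    have hg' : FreeGroup.lift f (mk ((L'' ++ [ℓ']) ++ [ℓ]))
        = FreeGroup.lift f (mk (L'' ++ [ℓ'])) * lv f ℓ := by
      rw [← mul_mk, _root_.map_mul, lift_mk_single]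
    have hgv2 : FreeGroup.lift f (mk (L'' ++ [ℓ'])) * lv f ℓ
        = mk ((P ++ A.drop d) ++ B) := by
      have t1 : FreeGroup.lift f (mk (L'' ++ [ℓ'])) = mk ((P ++ A.drop d) ++ C) := by
        rw [← hgw, mk_toWord]
      have t2 : lv f ℓ = mk (invRev C ++ B) := by rw [← e2, mk_toWord]
      have u1 : mk ((P ++ A.drop d) ++ C) = mk (P ++ A.drop d) * mk C := (mul_mk).symm
      have u2 : mk (invRev C ++ B) = (mk C)⁻¹ * mk B := by rw [inv_mk, mul_mk]
      have u3 : mk ((P ++ A.drop d) ++ B) = mk (P ++ A.drop d) * mk B := (mul_mk).symm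
      rw [t1, t2, u1, u2, u3]
      group
    have hAdne : A.drop d ≠ [] := by
      intro h
      have := List.length_drop (i := d) (l := A)
      rw [h] at this; simp at this; omega
    have hredPAB : Reduced ((P ++ A.drop d) ++ B) := by
      refine List.isChain_append.2 ⟨?_, hAB.append_right, ?_⟩
      · have h5 : Reduced ((P ++ A.drop d) ++ C) := by
          rw [← hgw]; exact reduced_toWord _
        exact h5.append_left
      · intro z hz u hu
        rw [List.getLast?_append_of_ne_nil _ hAdne, getLast?_drop_of_lt hdA] at hz
        have := (List.isChain_append.1 hAB).2.2
        exact this z hz u hu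
    have hdrop : (lv f ℓ).toWord.drop C.length = B := by
      rw [e2, ← invRev_length (L₁ := C), List.drop_left]
    have hWnew : (FreeGroup.lift f (mk ((L'' ++ [ℓ']) ++ [ℓ]))).toWord
        = (P ++ A.drop d) ++ ((lv f ℓ).toWord.drop C.length) := by
      rw [hdrop, hg', hgv2, toWord_mk_reduced hredPAB]
    refine ⟨P ++ A.drop d, C.length, hWnew, ?_, ?_⟩
    · intro u hu
      have h2 := H2 ℓ' ℓ u hNC hu
      omega
    · have hnew : (FreeGroup.lift f (mk ((L'' ++ [ℓ']) ++ [ℓ]))).norm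
          = P.length + (A.length - d) + B.length := by
        rw [FreeGroup.norm, hWnew, hdrop]
        simp only [List.length_append, List.length_drop]
      rw [hnew]
      simp only [List.length_append, List.length_singleton]
      omega

end Nielsen

namespace Nielsen
open FreeGroup List

theorem CL (f : Fin 2 → F2)
    (H1 : ∀ p q : Letter, NC p q → (lv f q).norm ≤ (lv f p * lv f q).norm)
    (H2 : ∀ p q r : Letter, NC p q → NC q r →
      (lv f p).norm + (lv f r).norm + 2 ≤ (lv f p * lv f q).norm + (lv f q * lv f r).norm)
    (Hne : ∀ p, lv f p ≠ 1) (g : F2) (hg : g ∈ (FreeGroup.lift f).range) :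
    g = 1 ∨ (∃ p : Letter, g = lv f p) ∨ 2 ≤ g.norm := by
  obtain ⟨m, rfl⟩ := hg
  have hm : FreeGroup.lift f m = FreeGroup.lift f (mk m.toWord) := by rw [mk_toWord]
  rcases m.toWord.eq_nil_or_concat' with hnil | ⟨L', ℓ, hL⟩
  · left
    rw [hm, hnil]
    simp [one_eq_mk.symm]
  have hredL : Reduced (L' ++ [ℓ]) := by rw [← hL]; exact reduced_toWord m
  obtain ⟨P, d, _, hdcond, hlen⟩ := CL_inv f H1 H2 Hne L' ℓ hredL
  have hNCll : NC ℓ ℓ := by rintro ⟨-, h2⟩; exact Bool.not_ne_self ℓ.2 h2.symm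
  have hdlt : d < (lv f ℓ).norm := by
    have h1 := hdcond ℓ hNCll
    have h2 := FreeGroup.norm_mul_le (lv f ℓ) (lv f ℓ)
    omega
  rcases L'.eq_nil_or_concat' with rfl | ⟨L'', ℓ', hL'⟩
  · right; left
    exact ⟨ℓ, by rw [hm, hL, List.nil_append, lift_mk_single]⟩
  · right; right
    have hL'len : 1 ≤ L'.length := by rw [hL']; simp
    have : FreeGroup.lift f m = FreeGroup.lift f (mk (L' ++ [ℓ])) := by rw [hm, hL]
    rw [this]
    omega

end Nielsen

namespace Nielsen
open FreeGroup

noncomputable section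

def ga : F2 := of 0
def gb : F2 := of 1

/-- Build an automorphism of F2 from images of generators and an inverse system. -/
def mkAut (f g : Fin 2 → F2)
    (h1 : ∀ i, FreeGroup.lift g (f i) = of i)
    (h2 : ∀ i, FreeGroup.lift f (g i) = of i) : MulAut F2 :=
  MonoidHom.toMulEquiv (FreeGroup.lift f) (FreeGroup.lift g)
    (FreeGroup.ext_hom _ _ (by intro i; simp [FreeGroup.lift_apply_of, h1 i]))
    (FreeGroup.ext_hom _ _ (by intro i; simp [FreeGroup.lift_apply_of, h2 i]))

theorem mkAut_apply (f g : Fin 2 → F2) (h1 h2) (z : F2) :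
    mkAut f g h1 h2 z = FreeGroup.lift f z := rfl

def autSwap : MulAut F2 :=
  mkAut ![gb, ga] ![gb, ga]
    (by intro i; fin_cases i <;> simp [ga, gb, FreeGroup.lift_apply_of])
    (by intro i; fin_cases i <;> simp [ga, gb, FreeGroup.lift_apply_of])

def autInv : MulAut F2 :=
  mkAut ![ga⁻¹, gb] ![ga⁻¹, gb]
    (by intro i; fin_cases i <;> simp [ga, gb, FreeGroup.lift_apply_of])
    (by intro i; fin_cases i <;> simp [ga, gb, FreeGroup.lift_apply_of])

def autMul : MulAut F2 :=
  mkAut ![ga, ga * gb] ![ga, ga⁻¹ * gb]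
    (by intro i; fin_cases i <;> simp [ga, gb, FreeGroup.lift_apply_of])
    (by intro i; fin_cases i <;> simp [ga, gb, FreeGroup.lift_apply_of])

theorem autSwap_a : autSwap ga = gb := by
  simp [autSwap, mkAut_apply, ga, FreeGroup.lift_apply_of]
theorem autSwap_b : autSwap gb = ga := by
  simp [autSwap, mkAut_apply, gb, FreeGroup.lift_apply_of]
theorem autInv_a : autInv ga = ga⁻¹ := by
  simp [autInv, mkAut_apply, ga, FreeGroup.lift_apply_of]
theorem autInv_b : autInv gb = gb := by
  simp [autInv, mkAut_apply, gb, FreeGroup.lift_apply_of]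
theorem autMul_a : autMul ga = ga := by
  simp [autMul, mkAut_apply, ga, FreeGroup.lift_apply_of]
theorem autMul_b : autMul gb = ga * gb := by
  simp [autMul, mkAut_apply, gb, FreeGroup.lift_apply_of]

def IsBasis (x y : F2) : Prop := ∃ ψ : MulAut F2, ψ ga = x ∧ ψ gb = y

theorem IsBasis.swap {x y : F2} (h : IsBasis x y) : IsBasis y x := by
  obtain ⟨ψ, h1, h2⟩ := h
  exact ⟨autSwap.trans ψ, by simp [MulEquiv.trans_apply, autSwap_a, h2],
    by simp [MulEquiv.trans_apply, autSwap_b, h1]⟩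

theorem IsBasis.invFst {x y : F2} (h : IsBasis x y) : IsBasis x⁻¹ y := by
  obtain ⟨ψ, h1, h2⟩ := h
  exact ⟨autInv.trans ψ, by simp [MulEquiv.trans_apply, autInv_a, map_inv, h1],
    by simp [MulEquiv.trans_apply, autInv_b, h2]⟩

theorem IsBasis.mulSnd {x y : F2} (h : IsBasis x y) : IsBasis x (x * y) := by
  obtain ⟨ψ, h1, h2⟩ := h
  exact ⟨autMul.trans ψ, by simp [MulEquiv.trans_apply, autMul_a, h1],
    by simp [MulEquiv.trans_apply, autMul_b, map_mul, h1, h2]⟩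

theorem IsBasis.conj {x y : F2} (g : F2) (h : IsBasis x y) :
    IsBasis (g * x * g⁻¹) (g * y * g⁻¹) := by
  obtain ⟨ψ, h1, h2⟩ := h
  exact ⟨ψ.trans (MulAut.conj g), by simp [MulEquiv.trans_apply, MulAut.conj_apply, h1, h2],
    by simp [MulEquiv.trans_apply, MulAut.conj_apply, h1, h2]⟩

theorem IsBasis.invSnd {x y : F2} (h : IsBasis x y) : IsBasis x y⁻¹ :=
  h.swap.invFst.swap

theorem IsBasis.mulSnd' {x y : F2} (h : IsBasis x y) : IsBasis x (x⁻¹ * y) := by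
  have := h.invFst.mulSnd.invFst
  simpa using this

theorem IsBasis.ne_one {x y : F2} (h : IsBasis x y) : x ≠ 1 ∧ y ≠ 1 := by
  obtain ⟨ψ, h1, h2⟩ := h
  constructor
  · rw [← h1]; intro hh
    exact FreeGroup.of_ne_one (0 : Fin 2) (ψ.injective (show ψ ga = ψ 1 by rw [hh, _root_.map_one]))
  · rw [← h2]; intro hh
    exact FreeGroup.of_ne_one (1 : Fin 2) (ψ.injective (show ψ gb = ψ 1 by rw [hh, _root_.map_one]))

theorem ga_mul_gb_ne_one : ga * gb ≠ 1 := by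
  intro h
  have : (ga * gb).norm = 0 := by rw [h, FreeGroup.norm_one]
  have h2 : ga * gb = mk [((0 : Fin 2), true), ((1 : Fin 2), true)] := by
    rw [ga, gb, of, of, mul_mk]; rfl
  have hred : Reduced [((0 : Fin 2), true), ((1 : Fin 2), true)] := by
    refine List.isChain_cons_cons.2 ⟨?_, reduced_singleton _⟩
    rintro ⟨h1, -⟩
    exact absurd h1 (by decide)
  rw [h2, norm_mk_reduced hred] at this
  simp at this

theorem ga_ne_gb : ga ≠ gb := by
  intro h
  exact absurd (FreeGroup.of_injective h) (by decide)

theorem IsBasis.ne {x y : F2} (h : IsBasis x y) : x ≠ y ∧ x * y ≠ 1 := by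
  obtain ⟨ψ, h1, h2⟩ := h
  constructor
  · rw [← h1, ← h2]
    intro hh
    exact ga_ne_gb (ψ.injective hh)
  · rw [← h1, ← h2]
    intro hh
    have h3 : ψ (ga * gb) = 1 := by rw [_root_.map_mul]; exact hh
    exact ga_mul_gb_ne_one (ψ.injective (show ψ (ga*gb) = ψ 1 by rw [h3, _root_.map_one]))

theorem IsBasis.closure {x y : F2} (h : IsBasis x y) :
    Subgroup.closure {x, y} = ⊤ := by
  obtain ⟨ψ, h1, h2⟩ := h
  have hab : Subgroup.closure ({ga, gb} : Set F2) = ⊤ := by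
    have := FreeGroup.closure_range_of (Fin 2)
    have hr : Set.range (FreeGroup.of : Fin 2 → F2) = {ga, gb} := by
      ext z
      constructor
      · rintro ⟨i, rfl⟩
        fin_cases i
        · exact Or.inl rfl
        · exact Or.inr rfl
      · rintro (rfl | rfl)
        · exact ⟨0, rfl⟩
        · exact ⟨1, rfl⟩
    rwa [hr] at this
  have : Subgroup.closure ({x, y} : Set F2)
      = (Subgroup.closure ({ga, gb} : Set F2)).map ψ.toMonoidHom := by
    rw [MonoidHom.map_closure]
    congr 1
    rw [Set.image_pair]
    simp [h1, h2]
  rw [this, hab]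
  exact Subgroup.map_top_of_surjective _ ψ.surjective

end

end Nielsen

namespace Nielsen

abbrev SL2 := Matrix.SpecialLinearGroup (Fin 2) ℝ

theorem trSL_mul_comm (g h : SL2) : trSL (g * h) = trSL (h * g) := by
  simp only [trSL, Matrix.SpecialLinearGroup.coe_mul]
  exact Matrix.trace_mul_comm _ _

theorem trSL_conj (k g : SL2) : trSL (k * g * k⁻¹) = trSL g := by
  rw [trSL_mul_comm]; group

theorem trSL_inv (g : SL2) : trSL g⁻¹ = trSL g := by
  simp only [trSL, Matrix.SpecialLinearGroup.coe_inv, Matrix.adjugate_fin_two,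
    Matrix.trace_fin_two]
  simp [Matrix.trace_fin_two, add_comm]

def trComm (g h : SL2) : ℝ := trSL (g * h * g⁻¹ * h⁻¹)

theorem tc_swap (g h : SL2) : trComm g h = trComm h g := by
  have : h * g * h⁻¹ * g⁻¹ = (g * h * g⁻¹ * h⁻¹)⁻¹ := by group
  rw [trComm, trComm, this, trSL_inv]

theorem tc_invl (g h : SL2) : trComm g⁻¹ h = trComm g h := by
  have : g⁻¹ * h * g⁻¹⁻¹ * h⁻¹ = g⁻¹ * (h * g * h⁻¹ * g⁻¹) * g⁻¹⁻¹ := by group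
  rw [trComm, this, trSL_conj, ← trComm, tc_swap]

theorem tc_invr (g h : SL2) : trComm g h⁻¹ = trComm g h := by
  rw [tc_swap, tc_invl, tc_swap]

theorem tc_mull (g h : SL2) : trComm (g * h) h = trComm g h := by
  have : g * h * h * (g * h)⁻¹ * h⁻¹ = g * h * g⁻¹ * h⁻¹ := by group
  rw [trComm, this, trComm]

theorem tc_mulr (g h : SL2) : trComm g (g * h) = trComm g h := by
  have : g * (g * h) * g⁻¹ * (g * h)⁻¹ = g * (g * h * g⁻¹ * h⁻¹) * g⁻¹ := by group
  rw [trComm, this, trSL_conj, trComm]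

theorem tc_conj (k g h : SL2) : trComm (k * g * k⁻¹) (k * h * k⁻¹) = trComm g h := by
  have : k * g * k⁻¹ * (k * h * k⁻¹) * (k * g * k⁻¹)⁻¹ * (k * h * k⁻¹)⁻¹
      = k * (g * h * g⁻¹ * h⁻¹) * k⁻¹ := by group
  rw [trComm, this, trSL_conj, trComm]

end Nielsen

namespace Nielsen
open FreeGroup

def TP (x y : F2) : Prop :=
  ∀ ρ : F2 →* SL2, trComm (ρ x) (ρ y) = trComm (ρ ga) (ρ gb)

theorem tc_mulr' (g h : SL2) : trComm g (g⁻¹ * h) = trComm g h := by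
  have h1 : trComm g (g⁻¹ * h) = trComm g⁻¹ (g⁻¹ * h) := by
    rw [← tc_invl g⁻¹ (g⁻¹ * h), inv_inv]
  rw [h1, tc_mulr, tc_invl]

theorem TP.swap {x y : F2} (h : TP x y) : TP y x := by
  intro ρ; rw [tc_swap]; exact h ρ

theorem TP.swap_rev {x y : F2} (h : TP y x) : TP x y := by
  intro ρ; rw [tc_swap]; exact h ρ

theorem tp_invFst_iff (x y : F2) : TP x⁻¹ y ↔ TP x y := by
  have e : ∀ ρ : F2 →* SL2, trComm (ρ x⁻¹) (ρ y) = trComm (ρ x) (ρ y) := fun ρ => by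
    rw [_root_.map_inv, tc_invl]
  constructor <;> intro h ρ
  · rw [← e ρ]; exact h ρ
  · rw [e ρ]; exact h ρ

theorem tp_invSnd_iff (x y : F2) : TP x y⁻¹ ↔ TP x y := by
  have e : ∀ ρ : F2 →* SL2, trComm (ρ x) (ρ y⁻¹) = trComm (ρ x) (ρ y) := fun ρ => by
    rw [_root_.map_inv, tc_invr]
  constructor <;> intro h ρ
  · rw [← e ρ]; exact h ρ
  · rw [e ρ]; exact h ρ

theorem tp_mulSnd_iff (x y : F2) : TP x (x * y) ↔ TP x y := by
  have e : ∀ ρ : F2 →* SL2, trComm (ρ x) (ρ (x * y)) = trComm (ρ x) (ρ y) := fun ρ => by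
    rw [_root_.map_mul, tc_mulr]
  constructor <;> intro h ρ
  · rw [← e ρ]; exact h ρ
  · rw [e ρ]; exact h ρ

theorem tp_mulSnd'_iff (x y : F2) : TP x (x⁻¹ * y) ↔ TP x y := by
  have e : ∀ ρ : F2 →* SL2, trComm (ρ x) (ρ (x⁻¹ * y)) = trComm (ρ x) (ρ y) := fun ρ => by
    rw [_root_.map_mul, _root_.map_inv, tc_mulr']
  constructor <;> intro h ρ
  · rw [← e ρ]; exact h ρ
  · rw [e ρ]; exact h ρ

theorem tp_conj_iff (g x y : F2) : TP (g * x * g⁻¹) (g * y * g⁻¹) ↔ TP x y := by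
  have e : ∀ ρ : F2 →* SL2,
      trComm (ρ (g * x * g⁻¹)) (ρ (g * y * g⁻¹)) = trComm (ρ x) (ρ y) := fun ρ => by
    simp only [_root_.map_mul, _root_.map_inv]
    exact tc_conj (ρ g) (ρ x) (ρ y)
  constructor <;> intro h ρ
  · rw [← e ρ]; exact h ρ
  · rw [e ρ]; exact h ρ

end Nielsen

namespace Nielsen
open FreeGroup List

theorem invRev_append (L1 L2 : Word) : invRev (L1 ++ L2) = invRev L2 ++ invRev L1 := by
  simp [invRev]

theorem norm_mul_parity (u v : F2) : ∃ k, u.norm + v.norm = (u * v).norm + 2 * k := by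
  obtain ⟨A, B, C, e1, e2, hred, hmul⟩ :=
    exists_cancel v.toWord u.toWord (reduced_toWord u) (reduced_toWord v)
  have h1 : A.length + C.length = u.norm := by rw [FreeGroup.norm, e1, List.length_append]
  have h2 : C.length + B.length = v.norm := by
    rw [FreeGroup.norm, e2, List.length_append, invRev_length]
  have h3 : (u * v).norm = A.length + B.length := by
    have : u * v = mk (A ++ B) := by rw [← mk_toWord (x := u), ← mk_toWord (x := v)]; exact hmul
    rw [this, norm_mk_reduced hred, List.length_append]
  exact ⟨C.length, by omega⟩

theorem no_double_half (u w : F2) (hu : u ≠ 1) :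
    ¬((u * w).norm = w.norm ∧ (u⁻¹ * w).norm = w.norm) := by
  rintro ⟨h1, h2⟩
  obtain ⟨A, B, C, e1, e2, hred, hmul⟩ :=
    exists_cancel w.toWord u.toWord (reduced_toWord u) (reduced_toWord w)
  obtain ⟨A2, B2, C2, f1, f2, gred, gmul⟩ :=
    exists_cancel w.toWord u⁻¹.toWord (reduced_toWord u⁻¹) (reduced_toWord w)
  have huw : u * w = mk (A ++ B) := by
    rw [← mk_toWord (x := u), ← mk_toWord (x := w)]; exact hmul
  have huw2 : u⁻¹ * w = mk (A2 ++ B2) := by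
    rw [← mk_toWord (x := u⁻¹), ← mk_toWord (x := w)]; exact gmul
  have l1 : A.length + C.length = u.norm := by rw [FreeGroup.norm, e1, List.length_append]
  have l2 : C.length + B.length = w.norm := by
    rw [FreeGroup.norm, e2, List.length_append, invRev_length]
  have l3 : A.length + B.length = w.norm := by
    rw [← h1, huw, norm_mk_reduced hred, List.length_append]
  have m1 : A2.length + C2.length = u.norm := by
    have hh : A2.length + C2.length = FreeGroup.norm u⁻¹ := by
      rw [FreeGroup.norm, f1, List.length_append]
    rwa [FreeGroup.norm_inv_eq] at hh
  have m2 : C2.length + B2.length = w.norm := by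
    rw [FreeGroup.norm, f2, List.length_append, invRev_length]
  have m3 : A2.length + B2.length = w.norm := by
    rw [← h2, huw2, norm_mk_reduced gred, List.length_append]
  have hCC2 : C.length = C2.length := by omega
  have hW : invRev C ++ B = invRev C2 ++ B2 := by rw [← e2, ← f2]
  have hCeq : C = C2 :=
    invRev_injective (List.append_inj hW (by rw [invRev_length, invRev_length, hCC2])).1
  have hUinv : invRev C ++ invRev A = A2 ++ C2 := by
    rw [← invRev_append, ← e1, ← FreeGroup.toWord_inv, f1]
  have hAinv : invRev A = C2 :=
    (List.append_inj hUinv (by rw [invRev_length, hCC2]; omega)).2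
  have hCA : C = invRev A := hCeq.trans hAinv.symm
  have hu2 : u = mk (A ++ invRev A) := by rw [← mk_toWord (x := u), e1, hCA]
  have hu3 : u = mk A * (mk A)⁻¹ := by
    rw [inv_mk, hu2, ← mul_mk]
  rw [mul_inv_cancel] at hu3
  exact hu hu3

theorem conj_trick (u v : F2) (hu : u ≠ 1) (hle : u.norm ≤ v.norm)
    (h1 : (u * v).norm = v.norm) (h2 : (v * u).norm = v.norm) :
    ∃ g : F2, (g * u * g⁻¹).norm + (g * (u * v) * g⁻¹).norm < u.norm + v.norm := by
  obtain ⟨A, B, C, e1, e2, hred, hmul⟩ :=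
    exists_cancel v.toWord u.toWord (reduced_toWord u) (reduced_toWord v)
  obtain ⟨A2, B2, C2, f1, f2, gred, gmul⟩ :=
    exists_cancel u.toWord v.toWord (reduced_toWord v) (reduced_toWord u)
  have huv : u * v = mk (A ++ B) := by
    rw [← mk_toWord (x := u), ← mk_toWord (x := v)]; exact hmul
  have hvu : v * u = mk (A2 ++ B2) := by
    rw [← mk_toWord (x := v), ← mk_toWord (x := u)]; exact gmul
  have l1 : A.length + C.length = u.norm := by rw [FreeGroup.norm, e1, List.length_append]
  have l2 : C.length + B.length = v.norm := by
    rw [FreeGroup.norm, e2, List.length_append, invRev_length]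
  have l3 : A.length + B.length = v.norm := by
    rw [← h1, huv, norm_mk_reduced hred, List.length_append]
  have m1 : A2.length + C2.length = v.norm := by rw [FreeGroup.norm, f1, List.length_append]
  have m2 : C2.length + B2.length = u.norm := by
    rw [FreeGroup.norm, f2, List.length_append, invRev_length]
  have m3 : A2.length + B2.length = v.norm := by
    rw [← h2, hvu, norm_mk_reduced gred, List.length_append]
  have hAC : A.length = C.length := by omega
  have hAC2 : A.length = C2.length := by omega
  have hmpos : 1 ≤ A.length := by
    by_contra hh
    have : u.norm = 0 := by omega
    exact hu (FreeGroup.norm_eq_zero.1 this)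
  have hU : A ++ C = invRev C2 ++ B2 := by rw [← e1, ← f2]
  have hAeq : A = invRev C2 ∧ C = B2 :=
    List.append_inj hU (by rw [invRev_length, hAC2])
  set W : Word := B.take (v.norm - 2 * A.length) with hWdef
  have hBdrop : v.toWord.drop A.length = B := by
    rw [e2]
    have hh : (invRev C).length = A.length := by rw [invRev_length]; omega
    rw [← hh, List.drop_left]
  have hC2drop : v.toWord.drop (v.norm - A.length) = C2 := by
    rw [f1]
    have hh : A2.length = v.norm - A.length := by omega
    rw [← hh, List.drop_left]
  have hsplit : B = W ++ C2 := by
    have hd : B.drop (v.norm - 2 * A.length) = C2 := by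
      rw [← hBdrop, List.drop_drop, ← hC2drop]
      congr 1
      omega
    rw [hWdef, ← hd, List.take_append_drop]
  have hredU : Reduced (A ++ C) := by rw [← e1]; exact reduced_toWord u
  have hredV : Reduced (invRev C ++ B) := by rw [← e2]; exact reduced_toWord v
  have hredA : Reduced A := hredU.append_left
  have hredC : Reduced C := hredU.append_right
  have hredB : Reduced B := hredV.append_right
  have hredW : Reduced W := hredB.prefix (List.take_prefix _ _)
  have hu_eq : u = mk A * mk C := by rw [← mk_toWord (x := u), e1, ← mul_mk]
  have hC2A : mk C2 = (mk A)⁻¹ := by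
    rw [inv_mk, hAeq.1, invRev_invRev]
  have hv_eq : v = (mk C)⁻¹ * (mk W * (mk A)⁻¹) := by
    have s1 : v = mk (invRev C ++ (W ++ C2)) := by
      rw [← mk_toWord (x := v), e2, ← hsplit]
    have s2 : mk (invRev C ++ (W ++ C2)) = mk (invRev C) * (mk W * mk C2) := by
      rw [mul_mk, mul_mk]
    rw [s1, s2, ← inv_mk, hC2A]
  refine ⟨(mk A)⁻¹, ?_⟩
  have e3 : (mk A)⁻¹ * u * ((mk A)⁻¹)⁻¹ = mk C * mk A := by rw [hu_eq]; group
  have e4 : (mk A)⁻¹ * (u * v) * ((mk A)⁻¹)⁻¹ = mk W := by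
    rw [hu_eq, hv_eq]; group
  rw [e3, e4]
  have n1 : (mk C * mk A).norm ≤ C.length + A.length := by
    calc (mk C * mk A).norm ≤ (mk C).norm + (mk A).norm := FreeGroup.norm_mul_le _ _
    _ = C.length + A.length := by rw [norm_mk_reduced hredC, norm_mk_reduced hredA]
  have n2 : (mk W).norm = v.norm - 2 * A.length := by
    rw [norm_mk_reduced hredW, hWdef, List.length_take]
    omega
  omega

end Nielsen

namespace Nielsen
open FreeGroup

theorem mk_single_false (i : Fin 2) : mk [((i : Fin 2), false)] = (of i)⁻¹ := by
  have := mk_single_inv ((i, true) : Letter)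
  exact this

theorem norm_eq_one_cases (x : F2) (h : x.norm = 1) :
    ∃ i : Fin 2, x = of i ∨ x = (of i)⁻¹ := by
  obtain ⟨p, hp⟩ := List.length_eq_one_iff.1 h
  rcases p with ⟨i, s⟩
  refine ⟨i, ?_⟩
  have hx : x = mk [(i, s)] := by rw [← mk_toWord (x := x), hp]
  cases s
  · right; rw [hx, mk_single_false]
  · left; exact hx

theorem tpab : TP ga gb := fun _ => rfl

theorem norm_rev (p q : F2) : (p * q).norm = (q⁻¹ * p⁻¹).norm := by
  rw [← FreeGroup.norm_inv_eq (x := p * q), mul_inv_rev]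

set_option maxHeartbeats 1600000 in
theorem bashH1 (x y : F2)
    (c1 : y.norm ≤ (x * y).norm) (c2 : y.norm ≤ (x⁻¹ * y).norm)
    (c3 : y.norm ≤ (x * y⁻¹).norm) (c4 : y.norm ≤ (x⁻¹ * y⁻¹).norm)
    (hle : x.norm ≤ y.norm)
    (rYX : (y * x).norm = (x⁻¹ * y⁻¹).norm)
    (rYX' : (y * x⁻¹).norm = (x * y⁻¹).norm)
    (rY'X : (y⁻¹ * x).norm = (x⁻¹ * y).norm)
    (rY'X' : (y⁻¹ * x⁻¹).norm = (x * y).norm)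
    (rXX : (x⁻¹ * x⁻¹).norm = (x * x).norm)
    (rYY : (y⁻¹ * y⁻¹).norm = (y * y).norm)
    (Sx : x.norm + 1 ≤ (x * x).norm) (Sy : y.norm + 1 ≤ (y * y).norm) :
    ∀ p q : Letter, NC p q →
      (lv ![x, y] q).norm ≤ (lv ![x, y] p * lv ![x, y] q).norm := by
  have fin2cases : ∀ i : Fin 2, i = 0 ∨ i = 1 := by omega
  rintro ⟨i, s⟩ ⟨j, t⟩ hpq
  rcases fin2cases i with rfl | rfl <;> rcases fin2cases j with rfl | rfl <;>
    cases s <;> cases t <;> simp [NC] at hpq <;>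
    simp [lv, FreeGroup.norm_inv_eq] <;> omega

set_option maxHeartbeats 3200000 in
theorem bashH2 (x y : F2) (k1 k2 k3 k4 k5 k6 : ℕ)
    (hyN : 2 ≤ y.norm) (hxn : 1 ≤ x.norm)
    (c1 : y.norm ≤ (x * y).norm) (c2 : y.norm ≤ (x⁻¹ * y).norm)
    (c3 : y.norm ≤ (x * y⁻¹).norm) (c4 : y.norm ≤ (x⁻¹ * y⁻¹).norm)
    (hle : x.norm ≤ y.norm)
    (rYX : (y * x).norm = (x⁻¹ * y⁻¹).norm)
    (rYX' : (y * x⁻¹).norm = (x * y⁻¹).norm)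
    (rY'X : (y⁻¹ * x).norm = (x⁻¹ * y).norm)
    (rY'X' : (y⁻¹ * x⁻¹).norm = (x * y).norm)
    (rXX : (x⁻¹ * x⁻¹).norm = (x * x).norm)
    (rYY : (y⁻¹ * y⁻¹).norm = (y * y).norm)
    (Sx : x.norm + 1 ≤ (x * x).norm) (Sy : y.norm + 1 ≤ (y * y).norm)
    (hk1 : x.norm + y.norm = (x * y).norm + 2 * k1)
    (hk2 : x.norm + y.norm = (x * y⁻¹).norm + 2 * k2)
    (hk3 : x.norm + y.norm = (x⁻¹ * y).norm + 2 * k3)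
    (hk4 : x.norm + y.norm = (x⁻¹ * y⁻¹).norm + 2 * k4)
    (hk5 : x.norm + x.norm = (x * x).norm + 2 * k5)
    (hk6 : y.norm + y.norm = (y * y).norm + 2 * k6)
    (E1 : ¬((x * y).norm = y.norm ∧ (y * x).norm = y.norm))
    (E2 : ¬((x * y⁻¹).norm = y.norm ∧ (y⁻¹ * x).norm = y.norm))
    (E3 : ¬((y * x).norm = x.norm ∧ (x * y).norm = x.norm))
    (E4 : ¬((y * x⁻¹).norm = x.norm ∧ (x⁻¹ * y).norm = x.norm))
    (I1 : ¬((x * y).norm = y.norm ∧ (x⁻¹ * y).norm = y.norm))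
    (I2 : ¬((x * y⁻¹).norm = y.norm ∧ (x⁻¹ * y⁻¹).norm = y.norm))
    (I3 : ¬((y * x⁻¹).norm = x.norm ∧ (y⁻¹ * x⁻¹).norm = x.norm))
    (I4 : ¬((y * x).norm = x.norm ∧ (y⁻¹ * x).norm = x.norm)) :
    ∀ p q r : Letter, NC p q → NC q r →
      (lv ![x, y] p).norm + (lv ![x, y] r).norm + 2 ≤
        (lv ![x, y] p * lv ![x, y] q).norm + (lv ![x, y] q * lv ![x, y] r).norm := by
  have fin2cases : ∀ i : Fin 2, i = 0 ∨ i = 1 := by omega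
  rintro ⟨i, s⟩ ⟨j, t⟩ ⟨l, w⟩ hpq hqr
  rcases fin2cases i with rfl | rfl <;> rcases fin2cases j with rfl | rfl <;>
    rcases fin2cases l with rfl | rfl <;>
    cases s <;> cases t <;> cases w <;> simp [NC] at hpq hqr <;>
    simp [lv, FreeGroup.norm_inv_eq] <;> omega

theorem reduceStep (x y : F2) (hB : IsBasis x y) (hsum : 3 ≤ x.norm + y.norm)
    (hle : x.norm ≤ y.norm) :
    ∃ x' y', IsBasis x' y' ∧ x'.norm + y'.norm < x.norm + y.norm ∧ (TP x' y' → TP x y) := by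
  obtain ⟨hx1, hy1⟩ := hB.ne_one
  obtain ⟨hxy, hxyne⟩ := hB.ne
  by_cases c1 : (x * y).norm < y.norm
  · exact ⟨x, x * y, hB.mulSnd, by omega, fun h => (tp_mulSnd_iff x y).1 h⟩
  by_cases c2 : (x⁻¹ * y).norm < y.norm
  · exact ⟨x, x⁻¹ * y, hB.mulSnd', by omega, fun h => (tp_mulSnd'_iff x y).1 h⟩
  by_cases c3 : (x * y⁻¹).norm < y.norm
  · refine ⟨x, x * y⁻¹, hB.invSnd.mulSnd, by omega, fun h => ?_⟩
    exact (tp_invSnd_iff x y).1 ((tp_mulSnd_iff x y⁻¹).1 h)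
  by_cases c4 : (x⁻¹ * y⁻¹).norm < y.norm
  · refine ⟨x, x⁻¹ * y⁻¹, hB.invSnd.mulSnd', by omega, fun h => ?_⟩
    exact (tp_invSnd_iff x y).1 ((tp_mulSnd'_iff x y⁻¹).1 h)
  push_neg at c1 c2 c3 c4
  -- E-cases: exact half-cancellation, use the conjugation trick
  by_cases E1 : (x * y).norm = y.norm ∧ (y * x).norm = y.norm
  · obtain ⟨g, hg⟩ := conj_trick x y hx1 hle E1.1 E1.2
    refine ⟨g * x * g⁻¹, g * (x * y) * g⁻¹, (hB.mulSnd).conj g, hg, fun h => ?_⟩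
    exact (tp_mulSnd_iff x y).1 ((tp_conj_iff g x (x * y)).1 h)
  by_cases E2 : (x * y⁻¹).norm = y.norm ∧ (y⁻¹ * x).norm = y.norm
  · have hley : x.norm ≤ (y⁻¹).norm := by rwa [FreeGroup.norm_inv_eq]
    have h1' : (x * y⁻¹).norm = (y⁻¹).norm := by rw [FreeGroup.norm_inv_eq]; exact E2.1
    have h2' : (y⁻¹ * x).norm = (y⁻¹).norm := by rw [FreeGroup.norm_inv_eq]; exact E2.2
    obtain ⟨g, hg⟩ := conj_trick x y⁻¹ hx1 hley h1' h2'
    rw [FreeGroup.norm_inv_eq] at hg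
    refine ⟨g * x * g⁻¹, g * (x * y⁻¹) * g⁻¹, (hB.invSnd.mulSnd).conj g, hg, fun h => ?_⟩
    exact (tp_invSnd_iff x y).1 ((tp_mulSnd_iff x y⁻¹).1 ((tp_conj_iff g x (x * y⁻¹)).1 h))
  by_cases E3 : (y * x).norm = x.norm ∧ (x * y).norm = x.norm
  · have hley : y.norm ≤ x.norm := by
      have := c1; omega
    obtain ⟨g, hg⟩ := conj_trick y x hy1 hley E3.1 E3.2
    refine ⟨g * y * g⁻¹, g * (y * x) * g⁻¹, (hB.swap.mulSnd).conj g, by omega, fun h => ?_⟩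
    exact ((tp_mulSnd_iff y x).1 ((tp_conj_iff g y (y * x)).1 h)).swap_rev
  by_cases E4 : (y * x⁻¹).norm = x.norm ∧ (x⁻¹ * y).norm = x.norm
  · have hley : y.norm ≤ (x⁻¹).norm := by
      rw [FreeGroup.norm_inv_eq]
      have h4 : (y * x⁻¹).norm = (x * y⁻¹).norm := by
        simpa using norm_rev y x⁻¹
      omega
    have h1' : (y * x⁻¹).norm = (x⁻¹).norm := by rw [FreeGroup.norm_inv_eq]; exact E4.1
    have h2' : (x⁻¹ * y).norm = (x⁻¹).norm := by rw [FreeGroup.norm_inv_eq]; exact E4.2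
    obtain ⟨g, hg⟩ := conj_trick y x⁻¹ hy1 hley h1' h2'
    rw [FreeGroup.norm_inv_eq] at hg
    refine ⟨g * y * g⁻¹, g * (y * x⁻¹) * g⁻¹, (hB.invFst.swap.mulSnd).conj g, by omega,
      fun h => ?_⟩
    have h5 : TP y x⁻¹ := (tp_mulSnd_iff y x⁻¹).1 ((tp_conj_iff g y (y * x⁻¹)).1 h)
    exact (tp_invFst_iff x y).1 h5.swap_rev
  -- Final case: Nielsen-reduced; contradiction with generation.
  exfalso
  have fin2cases : ∀ i : Fin 2, i = 0 ∨ i = 1 := by omega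
  -- norm facts
  have hyN : 2 ≤ y.norm := by omega
  have hxn : 1 ≤ x.norm := by
    rcases Nat.eq_zero_or_pos x.norm with h | h
    · exact absurd (FreeGroup.norm_eq_zero.1 h) hx1
    · exact h
  have rYX : (y * x).norm = (x⁻¹ * y⁻¹).norm := by simpa using norm_rev y x
  have rYX' : (y * x⁻¹).norm = (x * y⁻¹).norm := by simpa using norm_rev y x⁻¹
  have rY'X : (y⁻¹ * x).norm = (x⁻¹ * y).norm := by simpa using norm_rev y⁻¹ x
  have rY'X' : (y⁻¹ * x⁻¹).norm = (x * y).norm := by simpa using norm_rev y⁻¹ x⁻¹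
  have rXX : (x⁻¹ * x⁻¹).norm = (x * x).norm := by simpa using norm_rev x⁻¹ x⁻¹
  have rYY : (y⁻¹ * y⁻¹).norm = (y * y).norm := by simpa using norm_rev y⁻¹ y⁻¹
  have Sx : x.norm + 1 ≤ (x * x).norm := norm_sq_gt x hx1
  have Sy : y.norm + 1 ≤ (y * y).norm := norm_sq_gt y hy1
  obtain ⟨k1, hk1⟩ := norm_mul_parity x y
  obtain ⟨k2, hk2⟩ := norm_mul_parity x y⁻¹
  obtain ⟨k3, hk3⟩ := norm_mul_parity x⁻¹ y
  obtain ⟨k4, hk4⟩ := norm_mul_parity x⁻¹ y⁻¹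
  obtain ⟨k5, hk5⟩ := norm_mul_parity x x
  obtain ⟨k6, hk6⟩ := norm_mul_parity y y
  rw [FreeGroup.norm_inv_eq] at hk2 hk3 hk4
  rw [FreeGroup.norm_inv_eq (x := y)] at hk4
  have I1 := no_double_half x y hx1
  have I2 := no_double_half x y⁻¹ hx1
  have I3 := no_double_half y x⁻¹ hy1
  have I4 := no_double_half y x hy1
  rw [FreeGroup.norm_inv_eq] at I2 I3
  -- H1 and H2 for the cancellation lemma
  have Hne : ∀ p : Letter, lv ![x, y] p ≠ 1 := by
    rintro ⟨i, s⟩ h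
    rcases fin2cases i with rfl | rfl <;> cases s <;> simp [lv] at h <;> tauto
  have H1 := bashH1 x y c1 c2 c3 c4 hle rYX rYX' rY'X rY'X' rXX rYY Sx Sy
  have H2 := bashH2 x y k1 k2 k3 k4 k5 k6 hyN hxn c1 c2 c3 c4 hle rYX rYX' rY'X rY'X' rXX rYY
    Sx Sy hk1 hk2 hk3 hk4 hk5 hk6 E1 E2 E3 E4 I1 I2 I3 I4
  -- generation
  have hrange : (FreeGroup.lift ![x, y]).range = ⊤ := by
    rw [FreeGroup.range_lift_eq_closure]
    have hr : Set.range ![x, y] = {x, y} := by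
      ext z
      constructor
      · rintro ⟨i, rfl⟩
        rcases fin2cases i with rfl | rfl
        · left; simp
        · right; simp
      · rintro (rfl | rfl)
        · exact ⟨0, by simp⟩
        · exact ⟨1, by simp⟩
    rw [hr]
    exact hB.closure
  have hga := CL ![x, y] H1 H2 Hne ga (by rw [hrange]; trivial)
  have hgb := CL ![x, y] H1 H2 Hne gb (by rw [hrange]; trivial)
  have hgan : ga.norm = 1 := FreeGroup.norm_of 0
  have hgbn : gb.norm = 1 := FreeGroup.norm_of 1
  have hxcase : ∀ z : F2, z.norm = 1 → (∃ p : Letter, z = lv ![x, y] p) →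
      z = x ∨ z = x⁻¹ := by
    rintro z hz ⟨⟨i, s⟩, rfl⟩
    rcases fin2cases i with rfl | rfl <;> cases s
    · right; simp [lv]
    · left; simp [lv]
    · exfalso
      rw [show lv ![x, y] ((1 : Fin 2), false) = y⁻¹ by simp [lv]] at hz
      rw [FreeGroup.norm_inv_eq] at hz
      omega
    · exfalso
      rw [show lv ![x, y] ((1 : Fin 2), true) = y by simp [lv]] at hz
      omega
  have hganeq : ga = x ∨ ga = x⁻¹ := by
    rcases hga with h | h | h
    · exact absurd h (FreeGroup.of_ne_one 0)
    · exact hxcase ga hgan h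
    · omega
  have hgbeq : gb = x ∨ gb = x⁻¹ := by
    rcases hgb with h | h | h
    · exact absurd h (FreeGroup.of_ne_one 1)
    · exact hxcase gb hgbn h
    · omega
  rcases hganeq with h | h <;> rcases hgbeq with h' | h'
  · exact ga_ne_gb (h.trans h'.symm)
  · exact ga_mul_gb_ne_one (by rw [h, h']; group)
  · exact ga_mul_gb_ne_one (by rw [h, h']; group)
  · exact ga_ne_gb (h.trans h'.symm)

end Nielsen

namespace Nielsen
open FreeGroup

theorem base_case (x y : F2) (hB : IsBasis x y) (hsum : x.norm + y.norm ≤ 2) : TP x y := by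
  obtain ⟨hx1, hy1⟩ := hB.ne_one
  have hx : x.norm = 1 := by
    have h1 : x.norm ≠ 0 := fun h => hx1 (FreeGroup.norm_eq_zero.1 h)
    have h2 : y.norm ≠ 0 := fun h => hy1 (FreeGroup.norm_eq_zero.1 h)
    omega
  have hy : y.norm = 1 := by
    have h1 : x.norm ≠ 0 := fun h => hx1 (FreeGroup.norm_eq_zero.1 h)
    have h2 : y.norm ≠ 0 := fun h => hy1 (FreeGroup.norm_eq_zero.1 h)
    omega
  obtain ⟨i, hxi⟩ := norm_eq_one_cases x hx
  obtain ⟨j, hyj⟩ := norm_eq_one_cases y hy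
  -- same letter is impossible
  have hij : i ≠ j := by
    rintro rfl
    -- both x,y are powers of (of i); use a homomorphism to Multiplicative ℤ killing of i
    set k : F2 →* Multiplicative ℤ :=
      FreeGroup.lift (fun t => if t = i then (1 : Multiplicative ℤ)
        else Multiplicative.ofAdd 1) with hk
    have hkx : k x = 1 := by
      rcases hxi with rfl | rfl
      · rw [hk, FreeGroup.lift_apply_of]; simp
      · rw [_root_.map_inv, hk, FreeGroup.lift_apply_of]; simp
    have hky : k y = 1 := by
      rcases hyj with rfl | rfl
      · rw [hk, FreeGroup.lift_apply_of]; simp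
      · rw [_root_.map_inv, hk, FreeGroup.lift_apply_of]; simp
    have hker : Subgroup.closure ({x, y} : Set F2) ≤ k.ker := by
      rw [Subgroup.closure_le]
      rintro z (rfl | rfl)
      · exact hkx
      · exact hky
    rw [hB.closure] at hker
    have hi' : ∃ i' : Fin 2, i' ≠ i := by
      rcases (by omega : i = 0 ∨ i = 1) with rfl | rfl
      · exact ⟨1, by decide⟩
      · exact ⟨0, by decide⟩
    obtain ⟨i', hi'⟩ := hi'
    have : k (of i') = 1 := hker (Subgroup.mem_top _)
    rw [hk, FreeGroup.lift_apply_of, if_neg hi'] at this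
    have : (1 : ℤ) = 0 := by
      have := congrArg Multiplicative.toAdd this
      simpa using this
    omega
  -- now the 8 sign cases
  have tpa : TP ga gb := tpab
  rcases (by omega : i = 0 ∨ i = 1) with rfl | rfl <;>
    rcases (by omega : j = 0 ∨ j = 1) with rfl | rfl
  · exact absurd rfl hij
  · -- x = ga^±, y = gb^±
    rcases hxi with rfl | rfl <;> rcases hyj with rfl | rfl
    · exact tpa
    · exact (tp_invSnd_iff ga gb).2 tpa
    · exact (tp_invFst_iff ga gb).2 tpa
    · exact (tp_invSnd_iff ga⁻¹ gb).2 ((tp_invFst_iff ga gb).2 tpa)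
  · -- x = gb^±, y = ga^±
    have tpb : TP gb ga := tpa.swap
    rcases hxi with rfl | rfl <;> rcases hyj with rfl | rfl
    · exact tpb
    · exact (tp_invSnd_iff gb ga).2 tpb
    · exact (tp_invFst_iff gb ga).2 tpb
    · exact (tp_invSnd_iff gb⁻¹ ga).2 ((tp_invFst_iff gb ga).2 tpb)
  · exact absurd rfl hij

theorem main_aux : ∀ n : ℕ, ∀ x y : F2, x.norm + y.norm ≤ n → IsBasis x y → TP x y := by
  intro n
  induction n using Nat.strong_induction_on with
  | _ n IH =>
    intro x y hn hB
    by_cases h2 : x.norm + y.norm ≤ 2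
    · exact base_case x y hB h2
    · rcases le_or_gt x.norm y.norm with hle | hlt
      · obtain ⟨x', y', hB', hlt', himp⟩ := reduceStep x y hB (by omega) hle
        exact himp (IH (x'.norm + y'.norm) (by omega) x' y' le_rfl hB')
      · obtain ⟨x', y', hB', hlt', himp⟩ := reduceStep y x hB.swap (by omega) (le_of_lt hlt)
        exact (himp (IH (x'.norm + y'.norm) (by omega) x' y' le_rfl hB')).swap_rev

theorem main (x y : F2) (hB : IsBasis x y) : TP x y :=
  main_aux (x.norm + y.norm) x y le_rfl hB

end Nielsen

/-- For any homomorphism `ρ : F₂ → SL(2,ℝ)` and any automorphism `φ` of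
`F₂ = ⟨a,b⟩`, the trace of the commutator of the images of the generators is
unchanged: `Tr[ρ(φ a), ρ(φ b)] = Tr[ρ a, ρ b]`. -/
theorem stmt14 (ρ : FreeGroup (Fin 2) →* Matrix.SpecialLinearGroup (Fin 2) ℝ)
    (φ : MulAut (FreeGroup (Fin 2))) :
    trSL (ρ (φ (FreeGroup.of 0)) * ρ (φ (FreeGroup.of 1)) *
        (ρ (φ (FreeGroup.of 0)))⁻¹ * (ρ (φ (FreeGroup.of 1)))⁻¹) =
      trSL (ρ (FreeGroup.of 0) * ρ (FreeGroup.of 1) *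
        (ρ (FreeGroup.of 0))⁻¹ * (ρ (FreeGroup.of 1))⁻¹) :=
  Nielsen.main (φ (FreeGroup.of 0)) (φ (FreeGroup.of 1)) ⟨φ, rfl, rfl⟩ ρ
end

section
/- Let F₂ be the free group on two generators a, b, let ρ : F₂ → SL(2,ℝ) be a homomorphism, and let φ be an automorphism of F₂. If the triple (Tr ρ(a), Tr ρ(b), Tr ρ(a·b)) lies in V — i.e. two of its coordinates are 0 and the third has absolute value greater than 2 — then the triple (Tr ρ(φ(a)), Tr ρ(φ(b)), Tr ρ(φ(a·b))) also lies in V. -/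
/-- `(x,y,z) ∈ V` iff two of the coordinates are `0` and the third has absolute
value greater than `2`. -/
def memV (x y z : ℝ) : Prop :=
  (x = 0 ∧ y = 0 ∧ 2 < |z|) ∨ (x = 0 ∧ z = 0 ∧ 2 < |y|) ∨ (y = 0 ∧ z = 0 ∧ 2 < |x|)


abbrev SL2 := Matrix.SpecialLinearGroup (Fin 2) ℝ

lemma CH2 (m : Matrix (Fin 2) (Fin 2) ℝ) : m * m = m.trace • m - m.det • 1 := by
  ext i j
  fin_cases i <;> fin_cases j <;>
    simp [Matrix.mul_apply, Fin.sum_univ_two, Matrix.trace_fin_two, Matrix.det_fin_two,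
      Matrix.one_apply] <;> ring

lemma sl_det (g : SL2) : (g : Matrix (Fin 2) (Fin 2) ℝ).det = 1 := g.2

lemma CHg (g : SL2) : (g : Matrix (Fin 2) (Fin 2) ℝ) * g = trSL g • (g : Matrix (Fin 2) (Fin 2) ℝ) - 1 := by
  have := CH2 (g : Matrix (Fin 2) (Fin 2) ℝ)
  rw [sl_det] at this
  simpa [trSL] using this

lemma trSL_neg (g : SL2) : trSL (-g) = - trSL g := by simp [trSL]

set_option maxRecDepth 4000 in
lemma trSL_one : trSL (1 : SL2) = 2 := by
  unfold trSL
  rw [Matrix.SpecialLinearGroup.coe_one, Matrix.trace_one]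
  norm_num

lemma trSL_mul_comm (g h : SL2) : trSL (g * h) = trSL (h * g) := by
  unfold trSL
  rw [Matrix.SpecialLinearGroup.coe_mul, Matrix.SpecialLinearGroup.coe_mul,
    Matrix.trace_mul_comm]

lemma sq_eq_neg_one_iff (g : SL2) : g * g = -1 ↔ trSL g = 0 := by
  constructor
  · intro h
    have hm : (g : Matrix (Fin 2) (Fin 2) ℝ) * g = -1 := by
      have := congrArg (Subtype.val) h
      simpa using this
    have h2 : trSL g • (g : Matrix (Fin 2) (Fin 2) ℝ) = 0 := by
      have := CHg g
      rw [hm] at this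
      linear_combination (norm := (ext i j ; fin_cases i <;> fin_cases j <;> simp)) -this
    by_contra hne
    have hg0 : (g : Matrix (Fin 2) (Fin 2) ℝ) = 0 := by
      have := congrArg (fun m => (trSL g)⁻¹ • m) h2
      simpa [smul_smul, inv_mul_cancel₀ hne] using this
    have := sl_det g
    rw [hg0] at this
    simp at this
  · intro h
    have hm : (g : Matrix (Fin 2) (Fin 2) ℝ) * g = -1 := by
      have := CHg g
      rw [h] at this
      simpa using this
    apply Subtype.ext
    simpa using hm

lemma trSL_inv (g : SL2) : trSL g⁻¹ = trSL g := by
  simp [trSL, Matrix.SpecialLinearGroup.coe_inv, Matrix.adjugate_fin_two,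
    Matrix.trace_fin_two, add_comm]

lemma comm_abs_le (p q : SL2) (hp : p * p = -1) (hq : q * q = -1) (hc : p * q = q * p) :
    |trSL (p * q)| ≤ 2 := by
  have hsq : (p * q) * (p * q) = 1 := by
    calc (p*q)*(p*q) = p * (q * p) * q := by group
    _ = p * (p * q) * q := by rw [← hc]
    _ = (p*p) * (q*q) := by group
    _ = 1 := by rw [hp, hq]; ext : 1; simp
  set t := trSL (p*q) with ht
  have hm : ((p*q : SL2) : Matrix (Fin 2) (Fin 2) ℝ) * (p*q : SL2) = 1 := by
    have := congrArg Subtype.val hsq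
    simpa using this
  have h2 : t • ((p*q : SL2) : Matrix (Fin 2) (Fin 2) ℝ) = (2:ℝ) • 1 := by
    have := CHg (p*q)
    rw [hm] at this
    linear_combination (norm := (ext i j ; fin_cases i <;> fin_cases j <;> simp <;> ring)) -this
  by_cases hne : t = 0
  · exfalso
    rw [hne] at h2
    have := congrArg (fun m => m 0 0) h2
    simp [Matrix.one_apply] at this
  · have hg : ((p*q : SL2) : Matrix (Fin 2) (Fin 2) ℝ) = (2/t) • 1 := by
      have := congrArg (fun m => t⁻¹ • m) h2
      simpa [smul_smul, inv_mul_cancel₀ hne, div_eq_inv_mul] using this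
    have hd := sl_det (p*q)
    rw [hg] at hd
    have : (2/t)^2 = 1 := by
      simpa [Matrix.det_smul, Fintype.card_fin] using hd
    have ht2 : t^2 = 4 := by
      field_simp at this
      nlinarith [sq_nonneg t]
    have : |t| = 2 := by
      rw [← Real.sqrt_sq_eq_abs, ht2]
      rw [show (4:ℝ) = 2^2 by norm_num, Real.sqrt_sq (by norm_num)]
    linarith

lemma neg_one_mul' (g : SL2) : (-1 : SL2) * g = -g := Subtype.ext (by simp)

lemma mul_neg_one' (g : SL2) : g * (-1 : SL2) = -g := Subtype.ext (by simp)

lemma m1_sq : (-1 : SL2) * (-1) = 1 := Subtype.ext (by simp)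

lemma m1_inv : (-1 : SL2)⁻¹ = -1 := inv_eq_of_mul_eq_one_right m1_sq

lemma m1_comm (g : SL2) : Commute (-1 : SL2) g := by
  show (-1 : SL2) * g = g * (-1)
  rw [neg_one_mul', mul_neg_one']

lemma m1_pow_cases (j : ℕ) : (-1 : SL2)^j = 1 ∨ (-1 : SL2)^j = -1 := by
  rcases Nat.even_or_odd j with ⟨a, ha⟩ | ⟨a, ha⟩
  · left
    rw [ha, show a + a = 2*a by ring, pow_mul, show (-1:SL2)^2 = 1 by rw [sq, m1_sq], one_pow]
  · right
    rw [ha, pow_succ, pow_mul, show (-1:SL2)^2 = 1 by rw [sq, m1_sq], one_pow, one_mul]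

lemma abs_trSL_m1pow (j : ℕ) (g : SL2) : |trSL ((-1:SL2)^j * g)| = |trSL g| := by
  rcases m1_pow_cases j with h | h <;> rw [h]
  · rw [one_mul]
  · rw [neg_one_mul', trSL_neg, abs_neg]

lemma trSL_rec (C : SL2) (n : ℕ) :
    trSL (C^(n+2)) = trSL C * trSL (C^(n+1)) - trSL (C^n) := by
  have e1 : (C^(n+2) : SL2) = C^n * (C*C) := by
    rw [pow_succ, pow_succ, mul_assoc]
  have e2 : ((C^(n+2) : SL2) : Matrix (Fin 2) (Fin 2) ℝ)
      = trSL C • ((C^(n+1) : SL2) : Matrix (Fin 2) (Fin 2) ℝ)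
        - ((C^n : SL2) : Matrix (Fin 2) (Fin 2) ℝ) := by
    rw [e1, Matrix.SpecialLinearGroup.coe_mul, Matrix.SpecialLinearGroup.coe_mul, CHg, mul_sub, mul_smul_comm, mul_one,
      ← Matrix.SpecialLinearGroup.coe_mul, ← pow_succ]
  have := congrArg Matrix.trace e2
  simpa [trSL, Matrix.trace_sub, Matrix.trace_smul] using this

lemma trSL_pow_gt_aux (C : SL2) (h : 2 < |trSL C|) :
    ∀ n : ℕ, 2 < |trSL (C^(n+1))| ∧ |trSL (C^n)| ≤ |trSL (C^(n+1))| := by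
  intro n
  induction n with
  | zero => simpa [trSL_one] using ⟨h, le_of_lt h⟩
  | succ n ih =>
    obtain ⟨h1, h2⟩ := ih
    have hrec := trSL_rec C n
    have habs : |trSL C * trSL (C^(n+1))| - |trSL (C^n)| ≤ |trSL (C^(n+2))| := by
      rw [hrec]
      exact abs_sub_abs_le_abs_sub _ _
    rw [abs_mul] at habs
    constructor
    · nlinarith
    · nlinarith

lemma trSL_zpow_gt (C : SL2) (h : 2 < |trSL C|) (k : ℤ) (hk : k ≠ 0) :
    2 < |trSL (C^k)| := by
  rcases lt_trichotomy k 0 with hneg | hzero | hpos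
  · obtain ⟨n, hn⟩ : ∃ n : ℕ, (-k).toNat = n + 1 :=
      Nat.exists_eq_succ_of_ne_zero (by omega)
    have : C^k = (C^(n+1) : SL2)⁻¹ := by
      rw [← zpow_natCast C (n+1), ← zpow_neg]
      congr 1
      omega
    rw [this, trSL_inv]
    exact (trSL_pow_gt_aux C h n).1
  · exact absurd hzero hk
  · obtain ⟨n, hn⟩ : ∃ n : ℕ, k.toNat = n + 1 :=
      Nat.exists_eq_succ_of_ne_zero (by omega)
    have : C^k = C^(n+1) := by
      rw [← zpow_natCast C (n+1)]
      congr 1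
      omega
    rw [this]
    exact (trSL_pow_gt_aux C h n).1

lemma conj_zpow' (P C : SL2) (h : P * C = C⁻¹ * P) (k : ℤ) : P * C^k = C^(-k) * P := by
  have h1 : P * C * P⁻¹ = C⁻¹ := by rw [h]; group
  have h2 := map_zpow (MulAut.conj P) C k
  rw [MulAut.conj_apply, MulAut.conj_apply, h1] at h2
  have h3 : P * C^k = (C⁻¹)^k * P := by rw [← h2]; group
  rw [h3, inv_zpow, ← zpow_neg]

lemma comm_of_closure (x y : SL2) (h : x * y = y * x) {p q : SL2}
    (hp : p ∈ Subgroup.closure ({x, y} : Set SL2))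
    (hq : q ∈ Subgroup.closure ({x, y} : Set SL2)) : p * q = q * p := by
  have hcomm : ∀ a ∈ ({x, y} : Set SL2), ∀ b ∈ ({x, y} : Set SL2), a * b = b * a := by
    rintro a (rfl | rfl) b (rfl | rfl) <;> first | rfl | exact h | exact h.symm
  letI := Subgroup.closureCommGroupOfComm hcomm
  have := mul_comm (⟨p, hp⟩ : Subgroup.closure ({x, y} : Set SL2)) ⟨q, hq⟩
  exact congrArg Subtype.val this

lemma neg_mul'' (x y : SL2) : (-x) * y = -(x * y) := Subtype.ext (by simp)

lemma mul_neg'' (x y : SL2) : x * (-y) = -(x * y) := Subtype.ext (by simp)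

lemma neg_neg' (x : SL2) : -(-x) = x := Subtype.ext (by simp)

lemma slInvNeg (x : SL2) : (-x)⁻¹ = -(x⁻¹) := by
  rw [← neg_one_mul' x, mul_inv_rev, m1_inv, mul_neg_one']

lemma sl_neg_inv (g : SL2) (hg : g * g = -1) : g⁻¹ = -g := by
  refine inv_eq_of_mul_eq_one_right ?_
  rw [mul_neg'', hg, neg_neg']

lemma hPC_lemma (P Q : SL2) (hP2 : P * P = -1) (hQ2 : Q * Q = -1) :
    P * (P * Q) = (P * Q)⁻¹ * P := by
  rw [mul_inv_rev, mul_assoc, inv_mul_cancel, mul_one, sl_neg_inv Q hQ2,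
    ← mul_assoc, hP2, neg_one_mul']

lemma core10 (P Q : SL2) (hP2 : P * P = -1) (hQ2 : Q * Q = -1) (k m : ℤ) :
    ((P*Q)^k * P) * (P*Q)^m = (P*Q)^(k-m) * P := by
  rw [mul_assoc, conj_zpow' P (P*Q) (hPC_lemma P Q hP2 hQ2) m, ← mul_assoc,
    ← zpow_add, ← sub_eq_add_neg]

lemma core11 (P Q : SL2) (hP2 : P * P = -1) (hQ2 : Q * Q = -1) (k m : ℤ) :
    ((P*Q)^k * P) * ((P*Q)^m * P) = -((P*Q)^(k-m)) := by
  rw [show ((P*Q)^k * P) * ((P*Q)^m * P) = (((P*Q)^k * P) * (P*Q)^m) * P by group,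
    core10 P Q hP2 hQ2, mul_assoc, hP2, mul_neg_one']

lemma refl_sq (P Q : SL2) (hP2 : P * P = -1) (hQ2 : Q * Q = -1) (k : ℤ) :
    ((P*Q)^k * P) * ((P*Q)^k * P) = -1 := by
  rw [core11 P Q hP2 hQ2, sub_self, zpow_zero]

lemma classify (P Q : SL2) (hP2 : P * P = -1) (hQ2 : Q * Q = -1) {g : SL2}
    (hg : g ∈ Subgroup.closure ({P, Q} : Set SL2)) :
    ∃ (k : ℤ) (i : ℕ), i ≤ 1 ∧ (g = (P*Q)^k * P^i ∨ g = -((P*Q)^k * P^i)) := by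
  have hPCk := conj_zpow' P (P*Q) (hPC_lemma P Q hP2 hQ2)
  have hDneg : ∀ h : SL2, (∃ (k:ℤ) (i:ℕ), i ≤ 1 ∧ (h = (P*Q)^k * P^i ∨ h = -((P*Q)^k * P^i)))
      → (∃ (k:ℤ) (i:ℕ), i ≤ 1 ∧ (-h = (P*Q)^k * P^i ∨ -h = -((P*Q)^k * P^i))) := by
    rintro h ⟨k, i, hi, rfl | rfl⟩
    · exact ⟨k, i, hi, Or.inr rfl⟩
    · exact ⟨k, i, hi, Or.inl (neg_neg' _)⟩
  have hDcore : ∀ (k m : ℤ) (i j : ℕ), i ≤ 1 → j ≤ 1 →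
      ∃ (n:ℤ) (l:ℕ), l ≤ 1 ∧ (((P*Q)^k * P^i) * ((P*Q)^m * P^j) = (P*Q)^n * P^l ∨
        ((P*Q)^k * P^i) * ((P*Q)^m * P^j) = -((P*Q)^n * P^l)) := by
    intro k m i j hi hj
    interval_cases i <;> interval_cases j
    · exact ⟨k + m, 0, by norm_num, Or.inl (by simp [zpow_add])⟩
    · exact ⟨k + m, 1, le_refl 1, Or.inl (by simp [zpow_add, mul_assoc])⟩
    · refine ⟨k - m, 1, le_refl 1, Or.inl ?_⟩
      simp only [pow_one, pow_zero, mul_one]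
      exact core10 P Q hP2 hQ2 k m
    · refine ⟨k - m, 0, by norm_num, Or.inr ?_⟩
      simp only [pow_one, pow_zero, mul_one]
      exact core11 P Q hP2 hQ2 k m
  refine Subgroup.closure_induction ?_ ?_ ?_ ?_ hg
  · intro x hx
    simp only [Set.mem_insert_iff, Set.mem_singleton_iff] at hx
    rcases hx with h | h
    · exact ⟨0, 1, le_refl 1, Or.inl (by simp [h])⟩
    · refine ⟨-1, 1, le_refl 1, Or.inr ?_⟩
      rw [h, pow_one, zpow_neg_one, mul_inv_rev, mul_assoc, inv_mul_cancel, mul_one,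
        sl_neg_inv Q hQ2, neg_neg']
  · exact ⟨0, 0, by norm_num, Or.inl (by simp)⟩
  · rintro x y hxc hyc ⟨k, i, hi, hxe⟩ ⟨m, j, hj, hye⟩
    rcases hxe with rfl | rfl <;> rcases hye with rfl | rfl
    · exact hDcore k m i j hi hj
    · rw [mul_neg'']
      exact hDneg _ (hDcore k m i j hi hj)
    · rw [neg_mul'']
      exact hDneg _ (hDcore k m i j hi hj)
    · rw [neg_mul'', mul_neg'', neg_neg']
      exact hDcore k m i j hi hj
  · rintro x hxc ⟨k, i, hi, hxe⟩
    interval_cases i <;> rcases hxe with rfl | rfl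
    · exact ⟨-k, 0, by norm_num, Or.inl (by simp [zpow_neg])⟩
    · exact ⟨-k, 0, by norm_num, Or.inr (by simp [slInvNeg, zpow_neg])⟩
    · refine ⟨k, 1, le_refl 1, Or.inr ?_⟩
      simp only [pow_one] at *
      exact sl_neg_inv _ (refl_sq P Q hP2 hQ2 k)
    · refine ⟨k, 1, le_refl 1, Or.inl ?_⟩
      simp only [pow_one] at *
      rw [slInvNeg, sl_neg_inv _ (refl_sq P Q hP2 hQ2 k), neg_neg']

lemma key (P Q A B : SL2) (hP2 : P * P = -1) (hQ2 : Q * Q = -1)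
    (hPQ : 2 < |trSL (P * Q)|)
    (hA : A ∈ Subgroup.closure ({P, Q} : Set SL2))
    (hB : B ∈ Subgroup.closure ({P, Q} : Set SL2))
    (hP : P ∈ Subgroup.closure ({A, B} : Set SL2))
    (hQ : Q ∈ Subgroup.closure ({A, B} : Set SL2)) :
    memV (trSL A) (trSL B) (trSL (A * B)) := by
  have contra : A * B = B * A → False := by
    intro hc
    have h2 := comm_abs_le P Q hP2 hQ2 (comm_of_closure A B hc hP hQ)
    linarith
  obtain ⟨k, i, hi, hAe⟩ := classify P Q hP2 hQ2 hA
  obtain ⟨m, j, hj, hBe⟩ := classify P Q hP2 hQ2 hB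
  have trRef : ∀ n : ℤ, trSL ((P*Q)^n * P) = 0 := fun n =>
    (sq_eq_neg_one_iff _).mp (refl_sq P Q hP2 hQ2 n)
  have habs : ∀ g : SL2, |trSL (-g)| = |trSL g| := fun g => by rw [trSL_neg, abs_neg]
  have h01 : ∀ k m : ℤ, (P*Q)^k * ((P*Q)^m * P) = (P*Q)^(k+m) * P := fun k m => by
    rw [← mul_assoc, ← zpow_add]
  have hcomm00 : ∀ k m : ℤ, (P*Q)^k * (P*Q)^m = (P*Q)^m * (P*Q)^k := fun k m => by
    rw [← zpow_add, ← zpow_add, add_comm]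
  interval_cases i <;> interval_cases j <;>
    simp only [pow_zero, pow_one, mul_one] at hAe hBe
  -- case (0,0)
  · exfalso
    apply contra
    rcases hAe with rfl | rfl <;> rcases hBe with rfl | rfl <;>
      (try simp only [neg_mul'', mul_neg'', neg_neg']) <;> rw [hcomm00]
  -- case (0,1)
  · by_cases hk : k = 0
    · exfalso
      apply contra
      subst hk
      simp only [zpow_zero] at hAe
      rcases hAe with rfl | rfl <;> rcases hBe with rfl | rfl <;>
        first
        | rfl
        | simp only [neg_mul'', mul_neg'', neg_neg', one_mul, mul_one]
    · refine Or.inr (Or.inr ⟨?_, ?_, ?_⟩)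
      · rcases hBe with rfl | rfl
        · exact trRef m
        · rw [trSL_neg, trRef, neg_zero]
      · rcases hAe with rfl | rfl <;> rcases hBe with rfl | rfl <;>
          simp only [neg_mul'', mul_neg'', neg_neg', h01] <;>
          first
          | exact trRef _
          | (rw [trSL_neg, trRef, neg_zero])
      · rcases hAe with rfl | rfl
        · exact trSL_zpow_gt (P*Q) hPQ k hk
        · rw [habs]
          exact trSL_zpow_gt (P*Q) hPQ k hk
  -- case (1,0)
  · by_cases hm : m = 0
    · exfalso
      apply contra
      subst hm
      simp only [zpow_zero] at hBe
      rcases hAe with rfl | rfl <;> rcases hBe with rfl | rfl <;>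
        first
        | rfl
        | simp only [neg_mul'', mul_neg'', neg_neg', one_mul, mul_one]
    · have hc10 : ∀ k : ℤ, ((P*Q)^k * P) * (P*Q)^m = (P*Q)^(k-m) * P := fun k =>
        core10 P Q hP2 hQ2 k m
      refine Or.inr (Or.inl ⟨?_, ?_, ?_⟩)
      · rcases hAe with rfl | rfl
        · exact trRef k
        · rw [trSL_neg, trRef, neg_zero]
      · rcases hAe with rfl | rfl <;> rcases hBe with rfl | rfl <;>
          simp only [neg_mul'', mul_neg'', neg_neg', hc10] <;>
          first
          | exact trRef _
          | (rw [trSL_neg, trRef, neg_zero])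
      · rcases hBe with rfl | rfl
        · exact trSL_zpow_gt (P*Q) hPQ m hm
        · rw [habs]
          exact trSL_zpow_gt (P*Q) hPQ m hm
  -- case (1,1)
  · by_cases hkm : k = m
    · exfalso
      apply contra
      subst hkm
      rcases hAe with rfl | rfl <;> rcases hBe with rfl | rfl <;>
        first
        | rfl
        | simp only [neg_mul'', mul_neg'', neg_neg']
    · have hc11 : ∀ k : ℤ, ((P*Q)^k * P) * ((P*Q)^m * P) = -((P*Q)^(k-m)) := fun k =>
        core11 P Q hP2 hQ2 k m
      refine Or.inl ⟨?_, ?_, ?_⟩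
      · rcases hAe with rfl | rfl
        · exact trRef k
        · rw [trSL_neg, trRef, neg_zero]
      · rcases hBe with rfl | rfl
        · exact trRef m
        · rw [trSL_neg, trRef, neg_zero]
      · rcases hAe with rfl | rfl <;> rcases hBe with rfl | rfl <;>
          simp only [neg_mul'', mul_neg'', neg_neg', hc11] <;>
          first
          | exact trSL_zpow_gt (P*Q) hPQ _ (sub_ne_zero_of_ne hkm)
          | (rw [habs]; exact trSL_zpow_gt (P*Q) hPQ _ (sub_ne_zero_of_ne hkm))

lemma closure_image (ρ : FreeGroup (Fin 2) →* SL2) :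
    Subgroup.closure ({ρ (FreeGroup.of 0), ρ (FreeGroup.of 1)} : Set SL2) = ρ.range := by
  have hr : Set.range (FreeGroup.of : Fin 2 → FreeGroup (Fin 2))
      = {FreeGroup.of 0, FreeGroup.of 1} := by
    ext w
    constructor
    · rintro ⟨i, rfl⟩
      fin_cases i
      · exact Or.inl rfl
      · exact Or.inr rfl
    · rintro (rfl | rfl)
      exacts [⟨0, rfl⟩, ⟨1, rfl⟩]
  rw [MonoidHom.range_eq_map, ← FreeGroup.closure_range_of (Fin 2), MonoidHom.map_closure, hr,
    Set.image_insert_eq, Set.image_singleton]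

lemma cl2 (a b : SL2) : Subgroup.closure ({a, a*b} : Set SL2)
    = Subgroup.closure ({a, b} : Set SL2) := by
  apply le_antisymm
  · rw [Subgroup.closure_le]
    rintro x hx
    simp only [Set.mem_insert_iff, Set.mem_singleton_iff] at hx
    rcases hx with rfl | rfl
    · exact Subgroup.subset_closure (by simp)
    · exact mul_mem (Subgroup.subset_closure (by simp)) (Subgroup.subset_closure (by simp))
  · rw [Subgroup.closure_le]
    rintro x hx
    simp only [Set.mem_insert_iff, Set.mem_singleton_iff] at hx
    rcases hx with rfl | rfl
    · exact Subgroup.subset_closure (by simp)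
    · have h := mul_mem (inv_mem (Subgroup.subset_closure
        (show a ∈ ({a, a*x} : Set SL2) by simp)))
        (Subgroup.subset_closure (show a*x ∈ ({a, a*x} : Set SL2) by simp))
      simpa using h

lemma cl3 (a b : SL2) : Subgroup.closure ({b, a*b} : Set SL2)
    = Subgroup.closure ({a, b} : Set SL2) := by
  apply le_antisymm
  · rw [Subgroup.closure_le]
    rintro x hx
    simp only [Set.mem_insert_iff, Set.mem_singleton_iff] at hx
    rcases hx with rfl | rfl
    · exact Subgroup.subset_closure (by simp)
    · exact mul_mem (Subgroup.subset_closure (by simp)) (Subgroup.subset_closure (by simp))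
  · rw [Subgroup.closure_le]
    rintro x hx
    simp only [Set.mem_insert_iff, Set.mem_singleton_iff] at hx
    rcases hx with rfl | rfl
    · have h := mul_mem (Subgroup.subset_closure
        (show x*b ∈ ({b, x*b} : Set SL2) by simp))
        (inv_mem (Subgroup.subset_closure (show b ∈ ({b, x*b} : Set SL2) by simp)))
      simpa using h
    · exact Subgroup.subset_closure (by simp)


/-- If the character triple `(Tr ρ(a), Tr ρ(b), Tr ρ(a·b))` of a homomorphism
`ρ : F₂ → SL(2,ℝ)` lies in `V`, then so does the character triple with respect
to any other free basis, i.e. `(Tr ρ(φ a), Tr ρ(φ b), Tr ρ(φ (a·b)))` for any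
automorphism `φ` of `F₂`. -/
theorem stmt17 (ρ : FreeGroup (Fin 2) →* Matrix.SpecialLinearGroup (Fin 2) ℝ)
    (φ : MulAut (FreeGroup (Fin 2)))
    (hV : memV (trSL (ρ (FreeGroup.of 0))) (trSL (ρ (FreeGroup.of 1)))
      (trSL (ρ (FreeGroup.of 0 * FreeGroup.of 1)))) :
    memV (trSL (ρ (φ (FreeGroup.of 0)))) (trSL (ρ (φ (FreeGroup.of 1))))
      (trSL (ρ (φ (FreeGroup.of 0 * FreeGroup.of 1)))) := by
  set A := ρ (FreeGroup.of 0) with hA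
  set B := ρ (FreeGroup.of 1) with hB
  set A' := ρ (φ (FreeGroup.of 0)) with hA'
  set B' := ρ (φ (FreeGroup.of 1)) with hB'
  have hAB : ρ (FreeGroup.of 0 * FreeGroup.of 1) = A * B := map_mul ρ _ _
  have hAB' : ρ (φ (FreeGroup.of 0 * FreeGroup.of 1)) = A' * B' := by
    rw [map_mul, map_mul]
  rw [hAB] at hV
  rw [hAB']
  have hr1 : Subgroup.closure ({A, B} : Set SL2) = ρ.range := closure_image ρ
  have hr2 : Subgroup.closure ({A', B'} : Set SL2) = ρ.range := by
    have h1 := closure_image (ρ.comp φ.toMonoidHom)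
    have h2 : (ρ.comp φ.toMonoidHom).range = ρ.range := by
      ext x
      constructor
      · rintro ⟨w, rfl⟩
        exact ⟨φ w, rfl⟩
      · rintro ⟨w, rfl⟩
        exact ⟨φ.symm w, by simp⟩
    rw [← h2]
    exact h1
  have hmemA' : A' ∈ Subgroup.closure ({A, B} : Set SL2) := by
    rw [hr1]; exact ⟨φ (FreeGroup.of 0), rfl⟩
  have hmemB' : B' ∈ Subgroup.closure ({A, B} : Set SL2) := by
    rw [hr1]; exact ⟨φ (FreeGroup.of 1), rfl⟩
  have hmemA : A ∈ Subgroup.closure ({A', B'} : Set SL2) := by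
    rw [hr2]; exact ⟨FreeGroup.of 0, rfl⟩
  have hmemB : B ∈ Subgroup.closure ({A', B'} : Set SL2) := by
    rw [hr2]; exact ⟨FreeGroup.of 1, rfl⟩
  rcases hV with ⟨h1, h2, h3⟩ | ⟨h1, h2, h3⟩ | ⟨h1, h2, h3⟩
  · -- tr A = 0, tr B = 0, |tr AB| > 2 : P = A, Q = B
    have hP2 := (sq_eq_neg_one_iff A).mpr h1
    have hQ2 := (sq_eq_neg_one_iff B).mpr h2
    exact key A B A' B' hP2 hQ2 h3 hmemA' hmemB' hmemA hmemB
  · -- tr A = 0, tr AB = 0, |tr B| > 2 : P = A, Q = A*B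
    have hP2 := (sq_eq_neg_one_iff A).mpr h1
    have hQ2 := (sq_eq_neg_one_iff (A*B)).mpr h2
    have hPQ : 2 < |trSL (A * (A*B))| := by
      rw [← mul_assoc, hP2, neg_one_mul', trSL_neg, abs_neg]
      exact h3
    have hcl := cl2 A B
    exact key A (A*B) A' B' hP2 hQ2 hPQ (hcl ▸ hmemA')
      (hcl ▸ hmemB') hmemA (mul_mem hmemA hmemB)
  · -- tr B = 0, tr AB = 0, |tr A| > 2 : P = B, Q = A*B
    have hP2 := (sq_eq_neg_one_iff B).mpr h1
    have hQ2 := (sq_eq_neg_one_iff (A*B)).mpr h2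
    have hPQ : 2 < |trSL (B * (A*B))| := by
      rw [trSL_mul_comm, mul_assoc, hP2, mul_neg_one', trSL_neg, abs_neg]
      exact h3
    have hcl := cl3 A B
    exact key B (A*B) A' B' hP2 hQ2 hPQ (hcl ▸ hmemA')
      (hcl ▸ hmemB') hmemB (mul_mem hmemA hmemB)
end
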